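/- arXiv:1611.02983 — 16 statements merged into one kernel-verified Lean document; each statement's English description precedes it below -/
import Mathlib

section
/- Fix integers c ≥ 0 and b ≥ 2. If a positive integer a is a multiple of b, then a is a fixed point of S_{[c,b]} if and only if a + 1 is a fixed point of S_{[c,b]}. -/
/-- The augmented generalized happy function: `c` plus the sum of the squares
of the base-`b` digits of `a`. -/
def S (c b a : ℕ) : ℕ := c + ((Nat.digits b a).map (· ^ 2)).sum

theorem stmt_0 (c b : ℕ) (hb : 2 ≤ b) (a : ℕ) (ha : 0 < a) (hdvd : b ∣ a) :
    S c b a = a ↔ S c b (a + 1) = a + 1 := by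
  obtain ⟨k, rfl⟩ := hdvd
  have hb1 : 1 < b := hb
  have h1 : Nat.digits b (b * k) = 0 :: Nat.digits b k := by
    rw [Nat.digits_def' hb1 ha, Nat.mul_mod_right, Nat.mul_div_cancel_left _ (by omega)]
  have h2 : Nat.digits b (b * k + 1) = 1 :: Nat.digits b k := by
    rw [Nat.digits_def' hb1 (by omega), Nat.mul_add_mod, Nat.mod_eq_of_lt hb1,
      Nat.mul_add_div (by omega), Nat.div_eq_of_lt hb1, Nat.add_zero]
  simp only [S, h1, h2, List.map_cons, List.sum_cons]
  omega
end

section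
/- Fix integers c ≥ 0 and b ≥ 2. If a and a + 1 are both fixed points of S_{[c,b]} (with a a positive integer), then a is a multiple of b. -/
/-- Sum of squares of base-`b` digits. -/
def T (b n : ℕ) : ℕ := ((Nat.digits b n).map (· ^ 2)).sum

lemma T_expand {b n : ℕ} (hb : 2 ≤ b) (hn : 0 < n) :
    T b n = (n % b) ^ 2 + T b (n / b) := by
  unfold T
  rw [Nat.digits_def' (by omega : 1 < b) hn]
  simp

lemma T_succ_le {b : ℕ} (hb : 2 ≤ b) : ∀ n, T b (n + 1) ≤ T b n + (2 * b - 3) := by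
  intro n
  induction n using Nat.strong_induction_on with
  | _ n ih =>
    rcases Nat.eq_zero_or_pos n with hn | hn
    · subst hn
      have : T b 1 = 1 := by
        unfold T
        rw [Nat.digits_def' (by omega : 1 < b) one_pos]
        simp [Nat.mod_eq_of_lt (by omega : 1 < b), Nat.div_eq_of_lt (by omega : 1 < b)]
      simp [this]
      unfold T; simp
      omega
    · set q := n / b with hq
      set r := n % b with hr
      have hrb : r < b := Nat.mod_lt _ (by omega)
      have hdm : b * q + r = n := Nat.div_add_mod n b
      by_cases hcase : r + 1 < b
      · have hmod : (n + 1) % b = r + 1 := by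
          rw [← hdm, Nat.add_assoc, Nat.mul_add_mod]
          exact Nat.mod_eq_of_lt hcase
        have hdiv : (n + 1) / b = q := by
          rw [← hdm, Nat.add_assoc, Nat.mul_add_div (by omega)]
          simp [Nat.div_eq_of_lt hcase]
        rw [T_expand hb (by omega), T_expand hb hn, hmod, hdiv, ← hr, ← hq]
        have hx : (r + 1) ^ 2 = r ^ 2 + 2 * r + 1 := by ring
        omega
      · have hrval : r + 1 = b := by omega
        have hmul : n + 1 = b * (q + 1) := by
          have h5 : b * (q + 1) = b * q + b := by ring
          omega
        have hmod : (n + 1) % b = 0 := by rw [hmul]; exact Nat.mul_mod_right _ _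
        have hdiv : (n + 1) / b = q + 1 := by
          rw [hmul]; exact Nat.mul_div_cancel_left _ (by omega)
        have hqn : q < n := by
          apply Nat.div_lt_self hn; omega
        have ihq := ih q hqn
        rw [T_expand hb (by omega), T_expand hb hn, hmod, hdiv, ← hr, ← hq]
        omega

theorem stmt_1 (c b : ℕ) (hb : 2 ≤ b) (a : ℕ) (ha : 0 < a)
    (h1 : S c b a = a) (h2 : S c b (a + 1) = a + 1) : b ∣ a := by
  have key : T b (a + 1) = T b a + 1 := by
    unfold S at h1 h2
    unfold T
    omega
  set q := a / b with hq
  set r := a % b with hr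
  have hrb : r < b := Nat.mod_lt _ (by omega)
  have hdm : b * q + r = a := Nat.div_add_mod a b
  by_cases hcase : r + 1 < b
  · have hmod : (a + 1) % b = r + 1 := by
      rw [← hdm, Nat.add_assoc, Nat.mul_add_mod]
      exact Nat.mod_eq_of_lt hcase
    have hdiv : (a + 1) / b = q := by
      rw [← hdm, Nat.add_assoc, Nat.mul_add_div (by omega)]
      simp [Nat.div_eq_of_lt hcase]
    rw [T_expand hb (by omega), T_expand hb ha, hmod, hdiv, ← hr, ← hq] at key
    have hx : (r + 1) ^ 2 = r ^ 2 + 2 * r + 1 := by ring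
    have : r = 0 := by omega
    exact Nat.dvd_of_mod_eq_zero (by omega)
  · exfalso
    have hrval : r + 1 = b := by omega
    have hmul : a + 1 = b * (q + 1) := by
      have h5 : b * (q + 1) = b * q + b := by ring
      omega
    have hmod : (a + 1) % b = 0 := by rw [hmul]; exact Nat.mul_mod_right _ _
    have hdiv : (a + 1) / b = q + 1 := by
      rw [hmul]; exact Nat.mul_div_cancel_left _ (by omega)
    have hle := T_succ_le hb q
    rw [T_expand hb (by omega), T_expand hb ha, hmod, hdiv, ← hr, ← hq] at key
    have h4 : r ^ 2 + 4 ≤ 2 * b := by omega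
    rcases le_or_gt r 1 with h | h
    · interval_cases r <;> omega
    · have h6 : 2 * r ≤ r * r := Nat.mul_le_mul_right r (by omega)
      have h7 : r ^ 2 = r * r := sq r
      omega
end

section
/- Fix integers c ≥ 0 and b ≥ 2. There is no positive integer a such that a, a + 1, and a + 2 are all fixed points of S_{[c,b]}; that is, S_{[c,b]} has no three consecutive fixed points. -/
/-- Sum of squares of base-`b` digits. -/
def D (b a : ℕ) : ℕ := ((Nat.digits b a).map (· ^ 2)).sum

lemma D_step (b n : ℕ) (hb : 2 ≤ b) (hn : 0 < n) :
    D b n = (n % b) ^ 2 + D b (n / b) := by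
  unfold D
  rw [Nat.digits_def' (by omega : 1 < b) hn]
  simp

lemma carry (b : ℕ) (hb : 2 ≤ b) (k m : ℕ) (hm : 0 < m) (hd : ¬ b ∣ m) :
    D b (m * b ^ k - 1) + 2 * (m % b) = D b (m * b ^ k) + 1 + k * (b - 1) ^ 2 := by
  have hd' : m % b ≠ 0 := fun h => hd (Nat.dvd_of_mod_eq_zero h)
  induction k with
  | zero =>
      simp only [pow_zero, mul_one, Nat.zero_mul, add_zero]
      rcases Nat.lt_or_ge m 2 with h1 | h2
      · -- m = 1
        have hm1 : m = 1 := by omega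
        subst hm1
        have : Nat.digits b 1 = [1] := by
          rw [Nat.digits_def' (by omega : 1 < b) (by omega)]
          simp [Nat.div_eq_of_lt (by omega : 1 < b), Nat.mod_eq_of_lt (by omega : 1 < b)]
        simp [D, this, Nat.mod_eq_of_lt (by omega : 1 < b)]
      · -- m ≥ 2
        have hDm : D b m = (m % b) ^ 2 + D b (m / b) := D_step b m hb (by omega)
        have hkey : m - 1 = (m % b - 1) + b * (m / b) := by
          have := Nat.div_add_mod m b
          omega
        have hmod : (m - 1) % b = m % b - 1 := by
          rw [hkey, Nat.add_mul_mod_self_left,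
            Nat.mod_eq_of_lt (by have := Nat.mod_lt m (show 0 < b by omega); omega)]
        have hdiv : (m - 1) / b = m / b := by
          rw [hkey, Nat.add_mul_div_left _ _ (show 0 < b by omega),
            Nat.div_eq_of_lt (by have := Nat.mod_lt m (show 0 < b by omega); omega)]
          omega
        have hDm1 : D b (m - 1) = (m % b - 1) ^ 2 + D b (m / b) := by
          rw [D_step b (m - 1) hb (by omega), hmod, hdiv]
        rw [hDm, hDm1]
        obtain ⟨e, he⟩ : ∃ e, m % b = e + 1 := ⟨m % b - 1, by omega⟩
        rw [he]
        have h1 : e + 1 - 1 = e := by omega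
        rw [h1]
        have h2 : (e + 1) ^ 2 = e ^ 2 + 2 * e + 1 := by ring
        omega
  | succ k ih =>
      have hM : 0 < m * b ^ k := by positivity
      obtain ⟨M', hM'⟩ : ∃ M', m * b ^ k = M' + 1 := ⟨m * b ^ k - 1, by omega⟩
      have hN : m * b ^ (k + 1) = (M' + 1) * b := by rw [← hM']; ring
      have hexp : (M' + 1) * b = (b - 1) + b * M' + 1 := by
        have : (M' + 1) * b = M' * b + b := by ring
        rw [this, mul_comm M' b]
        omega
      have hsub : (M' + 1) * b - 1 = (b - 1) + b * M' := by omega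
      have hmod : ((M' + 1) * b - 1) % b = b - 1 := by
        rw [hsub, Nat.add_mul_mod_self_left, Nat.mod_eq_of_lt (by omega)]
      have hdiv : ((M' + 1) * b - 1) / b = M' := by
        rw [hsub, Nat.add_mul_div_left _ _ (show 0 < b by omega),
          Nat.div_eq_of_lt (by omega)]
        omega
      have hD1 : D b ((M' + 1) * b - 1) = (b - 1) ^ 2 + D b M' := by
        rw [D_step b _ hb (by omega), hmod, hdiv]
      have hD2 : D b ((M' + 1) * b) = D b (M' + 1) := by
        rw [D_step b _ hb (by positivity), Nat.mul_mod_left, Nat.mul_div_cancel _ (show 0 < b by omega)]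
        simp
      rw [hN, hD1, hD2, ← hM']
      have hM'eq : M' = m * b ^ k - 1 := by omega
      rw [hM'eq]
      have hk1 : (k + 1) * (b - 1) ^ 2 = k * (b - 1) ^ 2 + (b - 1) ^ 2 := by ring
      rw [hk1]
      omega

lemma exists_rep (b : ℕ) (hb : 2 ≤ b) :
    ∀ N, 0 < N → ∃ k m, 0 < m ∧ ¬ b ∣ m ∧ N = m * b ^ k := by
  intro N
  induction N using Nat.strong_induction_on with
  | _ N ih =>
    intro hN
    by_cases h : b ∣ N
    · obtain ⟨N', rfl⟩ := h
      have hN' : 0 < N' := by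
        rcases Nat.eq_zero_or_pos N' with h0 | h0
        · simp [h0] at hN
        · exact h0
      have hlt : N' < b * N' := by
        calc N' = 1 * N' := (one_mul N').symm
        _ < b * N' := by exact (Nat.mul_lt_mul_right hN').mpr (by omega)
      obtain ⟨k, m, hm, hd, rfl⟩ := ih N' hlt hN'
      exact ⟨k + 1, m, hm, hd, by ring⟩
    · exact ⟨0, N, hN, h, by simp⟩

lemma consec (c b n : ℕ) (hb : 2 ≤ b) (hn : 0 < n)
    (h1 : S c b n = n) (h2 : S c b (n + 1) = n + 1) : b ∣ n := by
  have hD : D b (n + 1) = D b n + 1 := by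
    unfold S at h1 h2
    unfold D
    omega
  by_cases hdvd : b ∣ (n + 1)
  · exfalso
    obtain ⟨k, m, hm, hd, hrep⟩ := exists_rep b hb (n + 1) (by omega)
    have hk : 0 < k := by
      rcases Nat.eq_zero_or_pos k with h0 | h0
      · subst h0; simp at hrep; rw [hrep] at hdvd; exact absurd hdvd hd
      · exact h0
    have hc := carry b hb k m hm hd
    rw [← hrep] at hc
    simp only [Nat.add_sub_cancel] at hc
    have hd1 : 1 ≤ m % b := by
      have : m % b ≠ 0 := fun h => hd (Nat.dvd_of_mod_eq_zero h)
      omega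
    have hd2 : m % b ≤ b - 1 := by
      have := Nat.mod_lt m (show 0 < b by omega)
      omega
    have heq : 2 * (m % b) = 2 + k * (b - 1) ^ 2 := by omega
    have hge : (b - 1) ^ 2 ≤ k * (b - 1) ^ 2 := Nat.le_mul_of_pos_left _ hk
    have hb1 : 1 ≤ b - 1 := by omega
    nlinarith [sq_nonneg (b - 1 - 1)]
  · have hc := carry b hb 0 (n + 1) (by omega) hdvd
    simp only [pow_zero, mul_one, Nat.zero_mul, add_zero, Nat.add_sub_cancel] at hc
    have hmod : (n + 1) % b = 1 := by omega
    have := Nat.div_add_mod (n + 1) b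
    exact ⟨(n + 1) / b, by omega⟩

theorem stmt_2 (c b : ℕ) (hb : 2 ≤ b) :
    ¬ ∃ a : ℕ, 0 < a ∧ S c b a = a ∧ S c b (a + 1) = a + 1 ∧ S c b (a + 2) = a + 2 := by
  rintro ⟨a, ha, h1, h2, h3⟩
  have d1 : b ∣ a := consec c b a hb ha h1 h2
  have d2 : b ∣ (a + 1) := consec c b (a + 1) hb (by omega) h2 (by
    have : a + 1 + 1 = a + 2 := by omega
    rw [this]; exact h3)
  have : b ∣ 1 := by
    have := Nat.dvd_sub d2 d1
    simpa using this
  have := Nat.le_of_dvd (by omega) this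
  omega
end

section
/- Fix integers c ≥ 0 and b ≥ 2. Let a be a positive integer whose base-b digit in position 1 (the coefficient a_1 of b^1) is nonzero. Let ã = (a - a_1·b) + (b - a_1)·b, i.e., the number obtained from a by replacing the digit a_1 with b - a_1. Then a is a fixed point of S_{[c,b]} if and only if ã is a fixed point of S_{[c,b]}. -/
lemma Ssum (b r d m : ℕ) (hb : 2 ≤ b) (hr : r < b) (hd : 0 < d) (hd' : d < b) :
    ((Nat.digits b (r + (d + b * m) * b)).map (· ^ 2)).sum
      = r ^ 2 + d ^ 2 + ((Nat.digits b m).map (· ^ 2)).sum := by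
  have hb1 : 1 < b := hb
  have hn : 0 < r + (d + b * m) * b := by positivity
  have hmod : (r + (d + b * m) * b) % b = r := by
    simp [Nat.add_mul_mod_self_right, Nat.mod_eq_of_lt hr]
  have hdiv : (r + (d + b * m) * b) / b = d + b * m := by
    rw [Nat.add_mul_div_right _ _ (by omega : 0 < b), Nat.div_eq_of_lt hr, zero_add]
  have hn2 : 0 < d + b * m := by omega
  have hmod2 : (d + b * m) % b = d := by
    simp [Nat.add_mul_mod_self_left, Nat.mod_eq_of_lt hd']
  have hdiv2 : (d + b * m) / b = m := by
    rw [Nat.add_mul_div_left _ _ (by omega : 0 < b), Nat.div_eq_of_lt hd', zero_add]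
  rw [Nat.digits_def' hb1 hn, hmod, hdiv, Nat.digits_def' hb1 hn2, hmod2, hdiv2]
  simp [add_assoc]

theorem stmt_3 (c b : ℕ) (hb : 2 ≤ b) (a : ℕ) (ha : 0 < a)
    (h1 : (a / b) % b ≠ 0) :
    S c b a = a ↔
      S c b (a - ((a / b) % b) * b + (b - (a / b) % b) * b)
        = a - ((a / b) % b) * b + (b - (a / b) % b) * b := by
  have hb0 : 0 < b := by omega
  set x := (a / b) % b with hx
  set m := (a / b) / b with hm
  set r := a % b with hr
  have hxb : x < b := Nat.mod_lt _ hb0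
  have hx1 : 1 ≤ x := Nat.one_le_iff_ne_zero.mpr h1
  have hrb : r < b := Nat.mod_lt _ hb0
  set y := b - x with hy
  have hxy : x + y = b := by omega
  have hy1 : 1 ≤ y := by omega
  have hyb : y < b := by omega
  have ha' : a = r + (x + b * m) * b := by
    rw [hr, hx, hm]
    have h2 : a / b = (a / b) % b + b * ((a / b) / b) := (Nat.mod_add_div _ _).symm
    have h3 : a = a % b + b * (a / b) := (Nat.mod_add_div _ _).symm
    rw [mul_comm, ← h2, ← h3]
  have htilde : a - x * b + (b - x) * b = r + (y + b * m) * b := by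
    rw [ha', ← hy]
    have e : (x + b * m) * b = x * b + b * m * b := by ring
    rw [e]
    have e2 : (y + b * m) * b = y * b + b * m * b := by ring
    rw [e2]
    omega
  rw [htilde]
  set T := ((Nat.digits b m).map (· ^ 2)).sum with hT
  have hSa : S c b a = c + (r ^ 2 + x ^ 2 + T) := by
    rw [S]; conv_lhs => rw [ha']
    rw [Ssum b r x m hb hrb hx1 hxb]
  have hSt : S c b (r + (y + b * m) * b) = c + (r ^ 2 + y ^ 2 + T) := by
    rw [S, Ssum b r y m hb hrb hy1 hyb]
  rw [hSa, hSt]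
  conv_lhs => rw [ha']
  have hxe : (x + b * m) * b = x * b + m * b * b := by ring
  have hye : (y + b * m) * b = y * b + m * b * b := by ring
  rw [hxe, hye]
  constructor <;> intro h
  · zify at h ⊢
    have hxy' : (x : ℤ) + y = b := by exact_mod_cast hxy
    linear_combination h + ((y : ℤ) - x) * hxy'
  · zify at h ⊢
    have hxy' : (x : ℤ) + y = b := by exact_mod_cast hxy
    linear_combination h + ((x : ℤ) - y) * hxy'
end

section
/- Fix integers c ≥ 0 and b ≥ 2 with b odd. If S_{[c,b]} has a fixed point, then c is even. -/
theorem stmt_4 (c b : ℕ) (hb : 2 ≤ b) (hodd : Odd b)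
    (h : ∃ a : ℕ, 0 < a ∧ S c b a = a) : Even c := by
  obtain ⟨a, _, hS⟩ := h
  have hb2 : b % 2 = 1 := Nat.odd_iff.mp hodd
  have h1 : (Nat.digits b a).sum ≡ a [MOD 2] := by
    conv_rhs => rw [← Nat.ofDigits_digits b a]
    have := (Nat.ofDigits_modEq b 2 (Nat.digits b a)).symm
    rwa [hb2, Nat.ofDigits_one] at this
  have h2 : ∀ L : List ℕ, (L.map (· ^ 2)).sum ≡ L.sum [MOD 2] := by
    intro L
    induction L with
    | nil => rfl
    | cons x xs ih =>
      simp only [List.map_cons, List.sum_cons]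
      refine Nat.ModEq.add ?_ ih
      show x ^ 2 % 2 = x % 2
      rw [Nat.pow_mod]
      rcases Nat.mod_two_eq_zero_or_one x with h | h <;> simp [h]
  have h3 : ((Nat.digits b a).map (· ^ 2)).sum ≡ a [MOD 2] :=
    (h2 _).trans h1
  have h4 : c + a ≡ a + 0 [MOD 2] := by
    calc c + a ≡ c + ((Nat.digits b a).map (· ^ 2)).sum [MOD 2] :=
          Nat.ModEq.add_left c h3.symm
      _ = a := hS
      _ ≡ a + 0 [MOD 2] := by rw [Nat.add_zero]
  have h5 : c + a ≡ 0 + a [MOD 2] := by rwa [Nat.add_comm a 0] at h4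
  exact Nat.even_iff.mpr (Nat.ModEq.add_right_cancel' a h5)
end

section
/- Fix integers c ≥ 0 and b ≥ 2 with b even. If a is a fixed point of S_{[c,b]}, then c is congruent modulo 2 to the sum of the base-b digits of a other than the units digit; equivalently, c ≡ D - (a mod b) (mod 2), where D is the sum of all base-b digits of a. -/
lemma sq_sum_mod2 (l : List ℕ) :
    (((l.map (· ^ 2)).sum : ℕ) : ZMod 2) = ((l.sum : ℕ) : ZMod 2) := by
  haveI : Fact (Nat.Prime 2) := ⟨by norm_num⟩
  induction l with
  | nil => simp
  | cons d t ih =>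
    simp only [List.map_cons, List.sum_cons, Nat.cast_add, ih]
    congr 1
    push_cast
    exact ZMod.pow_card (d : ZMod 2)

theorem stmt_5 (c b : ℕ) (hb : 2 ≤ b) (heven : Even b) (a : ℕ) (ha : 0 < a)
    (hfix : S c b a = a) :
    c ≡ (Nat.digits b a).sum - a % b [MOD 2] := by
  have hdig : Nat.digits b a = a % b :: Nat.digits b (a / b) :=
    Nat.digits_def' (by omega) ha
  set D' := (Nat.digits b (a / b)).sum with hD'
  have hsub : (Nat.digits b a).sum - a % b = D' := by
    rw [hdig]; simp [List.sum_cons, hD']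
  rw [hsub]
  rw [← ZMod.natCast_eq_natCast_iff]
  -- cast hfix to ZMod 2
  have hcast : ((S c b a : ℕ) : ZMod 2) = ((a : ℕ) : ZMod 2) := by rw [hfix]
  unfold S at hcast
  rw [Nat.cast_add, sq_sum_mod2, hdig] at hcast
  simp only [List.sum_cons, Nat.cast_add] at hcast
  -- b ≡ 0 mod 2, so a ≡ a % b
  have hb0 : ((b : ℕ) : ZMod 2) = 0 := by
    obtain ⟨k, hk⟩ := heven
    subst hk; push_cast
    rw [← two_mul, show ((2 : ZMod 2)) = 0 from by decide, zero_mul]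
  have hamod : ((a : ℕ) : ZMod 2) = ((a % b : ℕ) : ZMod 2) := by
    conv_lhs => rw [← Nat.div_add_mod a b]
    push_cast
    rw [hb0]; ring
  rw [hamod] at hcast
  -- now hcast : c + (a%b + D') = a%b in ZMod 2
  have : ((c : ℕ) : ZMod 2) + (D' : ZMod 2) = 0 := by
    have := hcast
    linear_combination this
  have hneg : ((c : ℕ) : ZMod 2) = -(D' : ZMod 2) := by linear_combination this
  rw [hneg]
  exact (CharTwo.neg_eq _)
end

section
/- Fix integers c ≥ 0 and b ≥ 2. If there exists an integer α with 1 ≤ α < b/2 and α² - α·b + c = 0, then the set F^(1)_{[c,b]} = {a = u·b : 0 < u < b and S_{[c,b]}(a) = a} has exactly two elements. -/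
theorem stmt_8 (c b : ℕ) (hb : 2 ≤ b)
    (h : ∃ α : ℕ, 1 ≤ α ∧ 2 * α < b ∧ (α : ℤ) ^ 2 - α * b + c = 0) :
    Set.ncard {a : ℕ | ∃ u : ℕ, 0 < u ∧ u < b ∧ a = u * b ∧ S c b a = a} = 2 := by
  obtain ⟨α, hα1, hα2, hαeq⟩ := h
  have hb0 : 0 < b := by omega
  have hb1 : 1 < b := hb
  have hS : ∀ u : ℕ, 0 < u → u < b → S c b (u * b) = c + u ^ 2 := by
    intro u hu hub
    have h1 : Nat.digits b (u * b) = [0, u] := by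
      rw [Nat.digits_def' hb1 (by positivity), Nat.mul_mod_left,
        Nat.mul_div_cancel _ hb0, Nat.digits_def' hb1 hu,
        Nat.mod_eq_of_lt hub, Nat.div_eq_of_lt hub]
      simp
    simp [S, h1]
  have hset : {a : ℕ | ∃ u : ℕ, 0 < u ∧ u < b ∧ a = u * b ∧ S c b a = a}
      = {α * b, (b - α) * b} := by
    ext a
    simp only [Set.mem_setOf_eq, Set.mem_insert_iff, Set.mem_singleton_iff]
    constructor
    · rintro ⟨u, hu, hub, rfl, hSu⟩
      rw [hS u hu hub] at hSu
      have hz : (c : ℤ) + u ^ 2 = u * b := by exact_mod_cast hSu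
      have hfac : ((u : ℤ) - α) * ((u : ℤ) - ((b : ℤ) - α)) = 0 := by nlinarith
      rcases mul_eq_zero.mp hfac with hcase | hcase
      · left
        have : u = α := by omega
        rw [this]
      · right
        have : u = b - α := by omega
        rw [this]
    · rintro (rfl | rfl)
      · refine ⟨α, by omega, by omega, rfl, ?_⟩
        rw [hS α (by omega) (by omega)]
        have : (c : ℤ) + (α : ℤ) ^ 2 = α * b := by linarith
        exact_mod_cast this
      · refine ⟨b - α, by omega, by omega, rfl, ?_⟩
        rw [hS (b - α) (by omega) (by omega)]
        have hcast : ((b - α : ℕ) : ℤ) = (b : ℤ) - α := by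
          push_cast [Nat.cast_sub (by omega : α ≤ b)]; ring
        have : (c : ℤ) + ((b - α : ℕ) : ℤ) ^ 2 = ((b - α : ℕ) : ℤ) * b := by
          rw [hcast]; nlinarith
        exact_mod_cast this
  rw [hset, Set.ncard_pair]
  intro hcontra
  have := Nat.eq_of_mul_eq_mul_right hb0 hcontra
  omega
end

section
/- Fix integers c ≥ 0 and b ≥ 2. If b² = 4c, then the set F^(1)_{[c,b]} = {a = u·b : 0 < u < b and S_{[c,b]}(a) = a} has exactly one element. -/
lemma digits_mul_base (b u : ℕ) (hb : 2 ≤ b) (hu0 : 0 < u) (hub : u < b) :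
    Nat.digits b (u * b) = [0, u] := by
  have h1 : 1 < b := hb
  rw [Nat.digits_def' h1 (by positivity), Nat.mul_mod_left, Nat.mul_div_cancel u (show 0 < b by omega),
    Nat.digits_def' h1 hu0, Nat.mod_eq_of_lt hub, Nat.div_eq_of_lt hub, Nat.digits_zero]

lemma S_mul_base (c b u : ℕ) (hb : 2 ≤ b) (hu0 : 0 < u) (hub : u < b) :
    S c b (u * b) = c + u ^ 2 := by
  rw [S, digits_mul_base b u hb hu0 hub]
  simp

theorem stmt_9 (c b : ℕ) (hb : 2 ≤ b) (h : b ^ 2 = 4 * c) :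
    Set.ncard {a : ℕ | ∃ u : ℕ, 0 < u ∧ u < b ∧ a = u * b ∧ S c b a = a} = 1 := by
  have hbe : 2 ∣ b := by
    rcases Nat.even_or_odd b with he | ho
    · exact he.two_dvd
    · exfalso
      have : Odd (b ^ 2) := ho.pow
      obtain ⟨k, hk⟩ := this
      omega
  obtain ⟨m, rfl⟩ := hbe
  have hc : c = m ^ 2 := by nlinarith [h]
  have hm : 1 ≤ m := by omega
  have hset : {a : ℕ | ∃ u : ℕ, 0 < u ∧ u < 2 * m ∧ a = u * (2 * m) ∧ S c (2 * m) a = a}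
      = {m * (2 * m)} := by
    ext a
    simp only [Set.mem_setOf_eq, Set.mem_singleton_iff]
    constructor
    · rintro ⟨u, hu0, hub, rfl, hS⟩
      rw [S_mul_base c (2 * m) u hb hu0 hub, hc] at hS
      have : u = m := by nlinarith
      rw [this]
    · rintro rfl
      refine ⟨m, hm, by omega, rfl, ?_⟩
      rw [S_mul_base c (2 * m) m hb hm (by omega), hc]
      ring
  rw [hset, Set.ncard_singleton]
end

section
/- Fix integers c ≥ 0 and b ≥ 2. If b² ≠ 4c and there is no integer α with 1 ≤ α < b/2 and α² - α·b + c = 0, then the set F^(1)_{[c,b]} = {a = u·b : 0 < u < b and S_{[c,b]}(a) = a} is empty. -/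
theorem stmt_10 (c b : ℕ) (hb : 2 ≤ b) (h1 : b ^ 2 ≠ 4 * c)
    (h2 : ¬ ∃ α : ℕ, 1 ≤ α ∧ 2 * α < b ∧ (α : ℤ) ^ 2 - α * b + c = 0) :
    {a : ℕ | ∃ u : ℕ, 0 < u ∧ u < b ∧ a = u * b ∧ S c b a = a} = ∅ := by
  ext a
  simp only [Set.mem_setOf_eq, Set.mem_empty_iff_false, iff_false]
  rintro ⟨u, hu0, hub, rfl, hS⟩
  have hd : Nat.digits b (u * b) = [0, u] := by
    rw [Nat.digits_def' hb (by positivity), Nat.mul_mod_left,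
      Nat.mul_div_cancel u (by omega : 0 < b), Nat.digits_def' hb hu0,
      Nat.mod_eq_of_lt hub, Nat.div_eq_of_lt hub, Nat.digits_zero]
  rw [S, hd] at hS
  simp at hS
  -- hS : c + u ^ 2 = u * b
  have key : (u : ℤ) ^ 2 - u * b + c = 0 := by zify at hS; linarith
  rcases lt_trichotomy (2 * u) b with h | h | h
  · exact h2 ⟨u, hu0, h, key⟩
  · apply h1
    have : c = u * u := by nlinarith [hS]
    nlinarith
  · refine h2 ⟨b - u, by omega, by omega, ?_⟩
    push_cast [Nat.cast_sub hub.le]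
    linear_combination key
end

section
/- Fix integers c > 0 and b ≥ 2 with b odd, and suppose b² - 4c + 1 ≥ 0. Then the number of two-digit fixed points of S_{[c,b]} (fixed points a with b ≤ a < b²) equals (1/2)·r₂(b² - 4c + 1) + |F^(1)_{[c,b]}|, where r₂(m) is the number of ordered pairs (x,y) of integers with x² + y² = m. -/
/-- `r2 m` is the number of ordered pairs `(x, y) ∈ ℤ²` with `x² + y² = m`. -/
noncomputable def r2 (m : ℤ) : ℕ := Set.ncard {p : ℤ × ℤ | p.1 ^ 2 + p.2 ^ 2 = m}

lemma digits_two {b a : ℕ} (hb : 2 ≤ b) (h1 : b ≤ a) (h2 : a < b ^ 2) :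
    Nat.digits b a = [a % b, a / b] := by
  have hb1 : 1 < b := hb
  have h0 : 0 < a := by omega
  have hd : 0 < a / b := Nat.div_pos h1 (by omega)
  have hd2 : a / b < b := Nat.div_lt_of_lt_mul (by nlinarith)
  rw [Nat.digits_def' hb1 h0, Nat.digits_def' hb1 hd, Nat.mod_eq_of_lt hd2,
    Nat.div_eq_of_lt hd2, Nat.digits_zero]

lemma S_two {c b a : ℕ} (hb : 2 ≤ b) (h1 : b ≤ a) (h2 : a < b ^ 2) :
    S c b a = c + (a % b) ^ 2 + (a / b) ^ 2 := by
  rw [S, digits_two hb h1 h2]; simp; ring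

lemma odd_of_sq_add_sq {x y K : ℤ} (h : x ^ 2 + y ^ 2 = 4 * K + 2) :
    Odd x ∧ Odd y := by
  rcases Int.even_or_odd x with ⟨s, hs⟩ | ⟨s, hs⟩ <;>
      rcases Int.even_or_odd y with ⟨t, ht⟩ | ⟨t, ht⟩ <;> subst hs ht
  · exfalso
    have h' : 4 * (s ^ 2 + t ^ 2) = 4 * K + 2 := by linear_combination h
    omega
  · exfalso
    have h' : 4 * (s ^ 2 + t ^ 2 + t) + 1 = 4 * K + 2 := by linear_combination h
    omega
  · exfalso
    have h' : 4 * (s ^ 2 + s + t ^ 2) + 1 = 4 * K + 2 := by linear_combination h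
    omega
  · exact ⟨⟨s, rfl⟩, ⟨t, rfl⟩⟩

theorem stmt_12 (c b : ℕ) (hc : 0 < c) (hb : 2 ≤ b) (hodd : Odd b)
    (hpos : 0 ≤ (b : ℤ) ^ 2 - 4 * c + 1) :
    2 * Set.ncard {a : ℕ | b ≤ a ∧ a < b ^ 2 ∧ S c b a = a} =
      r2 ((b : ℤ) ^ 2 - 4 * c + 1) +
        2 * Set.ncard {a : ℕ | ∃ u : ℕ, 0 < u ∧ u < b ∧ a = u * b ∧ S c b a = a} := by
  obtain ⟨k, hk⟩ := hodd
  set m : ℤ := (b : ℤ) ^ 2 - 4 * c + 1 with hm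
  have hm4 : m = 4 * ((k : ℤ) ^ 2 + k - c) + 2 := by
    have : (b : ℤ) = 2 * k + 1 := by exact_mod_cast congrArg (Nat.cast : ℕ → ℤ) hk
    rw [hm, this]; ring
  -- key sets
  set T : Set ℕ := {a : ℕ | b ≤ a ∧ a < b ^ 2 ∧ S c b a = a} with hT
  set F : Set ℕ := {a : ℕ | ∃ u : ℕ, 0 < u ∧ u < b ∧ a = u * b ∧ S c b a = a} with hF
  set R : Set (ℤ × ℤ) := {p : ℤ × ℤ | p.1 ^ 2 + p.2 ^ 2 = m} with hR
  set Rge : Set (ℤ × ℤ) := {p : ℤ × ℤ | p.1 ^ 2 + p.2 ^ 2 = m ∧ -1 ≤ p.2} with hRge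
  set Rp : Set (ℤ × ℤ) := {p : ℤ × ℤ | p.1 ^ 2 + p.2 ^ 2 = m ∧ 1 ≤ p.2} with hRp
  set Rn : Set (ℤ × ℤ) := {p : ℤ × ℤ | p.1 ^ 2 + p.2 ^ 2 = m ∧ p.2 ≤ -1} with hRn
  set R1 : Set (ℤ × ℤ) := {p : ℤ × ℤ | p.1 ^ 2 + p.2 ^ 2 = m ∧ p.2 = -1} with hR1
  -- bounds for members of R
  have hbound : ∀ p ∈ R, -(b : ℤ) < p.1 ∧ p.1 < b ∧ -(b : ℤ) < p.2 ∧ p.2 < b := by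
    intro p hp
    have hp' : p.1 ^ 2 + p.2 ^ 2 = m := hp
    have h1 : p.1 ^ 2 ≤ m := by nlinarith [sq_nonneg p.2]
    have h2 : p.2 ^ 2 ≤ m := by nlinarith [sq_nonneg p.1]
    have hmlt : m < (b : ℤ) ^ 2 := by rw [hm]; push_cast; omega
    have hb0 : (0 : ℤ) < b := by exact_mod_cast (by omega : 0 < b)
    refine ⟨?_, ?_, ?_, ?_⟩ <;> nlinarith
  -- oddness of coordinates
  have hoddR : ∀ p ∈ R, Odd p.1 ∧ Odd p.2 := by
    intro p hp
    exact odd_of_sq_add_sq (x := p.1) (y := p.2) (by rw [hp, hm4])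
  -- finiteness
  have hRfin : R.Finite := by
    apply Set.Finite.subset ((Set.finite_Icc (-(b:ℤ)) b).prod (Set.finite_Icc (-(b:ℤ)) b))
    intro p hp
    obtain ⟨h1, h2, h3, h4⟩ := hbound p hp
    exact ⟨Set.mem_Icc.2 ⟨by omega, by omega⟩, Set.mem_Icc.2 ⟨by omega, by omega⟩⟩
  have hRgefin : Rge.Finite := hRfin.subset fun p hp => hp.1
  have hRpfin : Rp.Finite := hRfin.subset fun p hp => hp.1
  have hRnfin : Rn.Finite := hRfin.subset fun p hp => hp.1
  have hR1fin : R1.Finite := hRfin.subset fun p hp => hp.1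
  -- the map f
  set f : ℕ → ℤ × ℤ := fun a => (2 * ((a / b : ℕ) : ℤ) - b, 2 * ((a % b : ℕ) : ℤ) - 1)
    with hf
  have hfinj : Function.Injective f := by
    intro a a' h
    simp only [hf, Prod.mk.injEq] at h
    have h1 : a / b = a' / b := by omega
    have h2 : a % b = a' % b := by omega
    calc a = b * (a / b) + a % b := (Nat.div_add_mod a b).symm
      _ = b * (a' / b) + a' % b := by rw [h1, h2]
      _ = a' := Nat.div_add_mod a' b
  -- forward direction: values of f on T land in Rge
  have hfwd : ∀ a ∈ T, f a ∈ Rge ∧ (a ∈ F ↔ f a ∈ R1) := by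
    intro a ha
    obtain ⟨h1, h2, h3⟩ := ha
    set u := a / b with hu
    set v := a % b with hv
    have hvb : v < b := Nat.mod_lt _ (by omega)
    have hdm : b * u + v = a := Nat.div_add_mod a b
    have hS : c + v ^ 2 + u ^ 2 = a := by rw [← h3, S_two hb h1 h2]
    have hSZ : (c : ℤ) + (v : ℤ) ^ 2 + (u : ℤ) ^ 2 = a := by exact_mod_cast hS
    have hdmZ : (b : ℤ) * u + v = a := by exact_mod_cast hdm
    constructor
    · constructor
      · show (2 * (u : ℤ) - b) ^ 2 + (2 * (v : ℤ) - 1) ^ 2 = m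
        rw [hm]; linear_combination 4 * hSZ - 4 * hdmZ
      · show (-1 : ℤ) ≤ 2 * (v : ℤ) - 1
        have : (0 : ℤ) ≤ (v : ℤ) := Int.natCast_nonneg v
        omega
    · constructor
      · rintro ⟨w, hw0, hwb, hwa, -⟩
        refine ⟨?_, ?_⟩
        · show (2 * (u : ℤ) - b) ^ 2 + (2 * (v : ℤ) - 1) ^ 2 = m
          rw [hm]; linear_combination 4 * hSZ - 4 * hdmZ
        · show 2 * ((v : ℕ) : ℤ) - 1 = -1
          have : v = 0 := by
            rw [hv, hwa, Nat.mul_mod_left]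
          rw [this]; norm_num
      · rintro ⟨-, hy⟩
        have hy' : 2 * ((a % b : ℕ) : ℤ) - 1 = -1 := hy
        have hv0 : v = 0 := by
          have h0 : ((a % b : ℕ) : ℤ) = 0 := by omega
          rw [hv]; exact_mod_cast h0
        refine ⟨u, Nat.div_pos h1 (by omega), ?_, ?_, h3⟩
        · exact Nat.div_lt_of_lt_mul (by rw [← sq]; exact h2)
        · rw [Nat.mul_comm u b, ← hdm, hv0]
          exact Nat.add_zero _
  -- f '' T = Rge
  have himT : f '' T = Rge := by
    apply Set.Subset.antisymm
    · rintro p ⟨a, ha, rfl⟩; exact (hfwd a ha).1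
    · rintro ⟨x, y⟩ ⟨hxy, hy⟩
      have hxyR : (x, y) ∈ R := hxy
      obtain ⟨⟨s, hs⟩, ⟨t, ht⟩⟩ := hoddR _ hxyR
      obtain ⟨hx1, hx2, hy1, hy2⟩ := hbound _ hxyR
      have hbZ : (b : ℤ) = 2 * k + 1 := by exact_mod_cast congrArg (Nat.cast : ℕ → ℤ) hk
      -- u' = s + k + 1, v' = t + 1 as integers; show they give naturals
      have hu1 : 1 ≤ s + k + 1 := by omega
      have hu2 : s + k + 1 ≤ (k : ℤ) + k := by omega
      have hv1 : 0 ≤ t + 1 := by omega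
      have hv2 : t + 1 ≤ (k : ℤ) := by omega
      obtain ⟨u, hu⟩ : ∃ u : ℕ, (u : ℤ) = s + k + 1 :=
        ⟨(s + k + 1).toNat, Int.toNat_of_nonneg (by omega)⟩
      obtain ⟨v, hvZ⟩ : ∃ v : ℕ, (v : ℤ) = t + 1 :=
        ⟨(t + 1).toNat, Int.toNat_of_nonneg (by omega)⟩
      have hub : 1 ≤ u ∧ u < b := by
        constructor
        · have : (1 : ℤ) ≤ u := by omega
          exact_mod_cast this
        · have : (u : ℤ) < b := by rw [hu, hbZ]; omega
          exact_mod_cast this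
      have hvb : v < b := by
        have : (v : ℤ) < b := by rw [hvZ, hbZ]; omega
        exact_mod_cast this
      refine ⟨v + b * u, ?_, ?_⟩
      · have hdiv : (v + b * u) / b = u := by
          rw [Nat.add_mul_div_left _ _ (by omega : 0 < b), Nat.div_eq_of_lt hvb]; omega
        have hmod : (v + b * u) % b = v := by
          rw [Nat.add_mul_mod_self_left, Nat.mod_eq_of_lt hvb]
        have h1 : b ≤ v + b * u := by
          have h' : b * 1 ≤ b * u := Nat.mul_le_mul le_rfl hub.1
          omega
        have h2 : v + b * u < b ^ 2 := by
          have h' : b * (u + 1) ≤ b * b := Nat.mul_le_mul le_rfl hub.2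
          have hbb : b ^ 2 = b * b := sq b
          rw [Nat.mul_add, Nat.mul_one] at h'
          omega
        have hSval : S c b (v + b * u) = c + v ^ 2 + u ^ 2 := by
          rw [S_two hb h1 h2, hmod, hdiv]
        have hfix : c + v ^ 2 + u ^ 2 = v + b * u := by
          have : (c : ℤ) + (v : ℤ) ^ 2 + (u : ℤ) ^ 2 = (v : ℤ) + (b : ℤ) * u := by
            have hx : x = 2 * (u : ℤ) - b := by rw [hu, hbZ]; omega
            have hy' : y = 2 * (v : ℤ) - 1 := by omega
            have hxy' : (2 * (u : ℤ) - b) ^ 2 + (2 * (v : ℤ) - 1) ^ 2 = m := by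
              rw [← hx, ← hy']; exact hxy
            rw [hm] at hxy'
            have h4 : 4 * ((c : ℤ) + (v : ℤ) ^ 2 + (u : ℤ) ^ 2) =
                4 * ((v : ℤ) + (b : ℤ) * u) := by linear_combination hxy'
            linarith
          exact_mod_cast this
        exact ⟨h1, h2, by rw [hSval, hfix]⟩
      · have hdiv : (v + b * u) / b = u := by
          rw [Nat.add_mul_div_left _ _ (by omega : 0 < b), Nat.div_eq_of_lt hvb]; omega
        have hmod : (v + b * u) % b = v := by
          rw [Nat.add_mul_mod_self_left, Nat.mod_eq_of_lt hvb]
        simp only [hf, hdiv, hmod]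
        have hx : x = 2 * (u : ℤ) - b := by rw [hu, hbZ]; omega
        have hy' : y = 2 * (v : ℤ) - 1 := by omega
        rw [hx, hy']
  -- F ⊆ T and f '' F = R1
  have hFT : F ⊆ T := by
    rintro a ⟨u, hu0, hub, rfl, hS⟩
    have h1 : b * 1 ≤ b * u := Nat.mul_le_mul le_rfl hu0
    have h2 : b * (u + 1) ≤ b * b := Nat.mul_le_mul le_rfl hub
    have hbb : b ^ 2 = b * b := sq b
    rw [Nat.mul_add, Nat.mul_one] at h2
    exact ⟨by rw [Nat.mul_comm]; omega, by rw [Nat.mul_comm]; omega, hS⟩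
  have himF : f '' F = R1 := by
    apply Set.Subset.antisymm
    · rintro p ⟨a, ha, rfl⟩
      exact ((hfwd a (hFT ha)).2).1 ha
    · rintro ⟨x, y⟩ hp
      have hRge' : (x, y) ∈ Rge := ⟨hp.1, by rw [hp.2]⟩
      obtain ⟨a, haT, hfa⟩ := himT.symm ▸ hRge'
      exact ⟨a, ((hfwd a haT).2).2 (hfa ▸ hp), hfa⟩
  -- finiteness of T, F
  have hTfin : T.Finite := by
    have : T ⊆ Set.Iio (b ^ 2) := fun a ha => ha.2.1
    exact (Set.finite_Iio _).subset this
  have hFfin : F.Finite := hTfin.subset hFT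
  -- cardinalities
  have hcardT : T.ncard = Rge.ncard := by
    rw [← himT, Set.ncard_image_of_injective _ hfinj]
  have hcardF : F.ncard = R1.ncard := by
    rw [← himF, Set.ncard_image_of_injective _ hfinj]
  -- Rge = Rp ∪ R1, disjoint
  have hsplit : Rge = Rp ∪ R1 := by
    apply Set.Subset.antisymm
    · rintro ⟨x, y⟩ ⟨hxy, hy⟩
      obtain ⟨-, t, ht⟩ := hoddR (x, y) hxy
      by_cases h : y = -1
      · exact Or.inr ⟨hxy, h⟩
      · exact Or.inl ⟨hxy, by simp only at hy ht ⊢; omega⟩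
    · rintro ⟨x, y⟩ (⟨hxy, hy⟩ | ⟨hxy, hy⟩)
      · exact ⟨hxy, by simp only at hy ⊢; omega⟩
      · exact ⟨hxy, le_of_eq hy.symm⟩
  have hdisj : Disjoint Rp R1 := by
    rw [Set.disjoint_left]
    rintro ⟨x, y⟩ ⟨-, hy⟩ ⟨-, hy'⟩
    simp only at hy hy'; omega
  -- R = Rp ∪ Rn, disjoint, and ncard Rn = ncard Rp
  have hsplit2 : R = Rp ∪ Rn := by
    apply Set.Subset.antisymm
    · rintro ⟨x, y⟩ hxy
      obtain ⟨-, t, ht⟩ := hoddR (x, y) hxy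
      rcases le_or_gt 1 y with h | h
      · exact Or.inl ⟨hxy, h⟩
      · exact Or.inr ⟨hxy, by simp only at ht ⊢; omega⟩
    · rintro ⟨x, y⟩ (⟨hxy, -⟩ | ⟨hxy, -⟩) <;> exact hxy
  have hdisj2 : Disjoint Rp Rn := by
    rw [Set.disjoint_left]
    rintro ⟨x, y⟩ ⟨-, hy⟩ ⟨-, hy'⟩
    simp only at hy hy'; omega
  have hneg : (fun p : ℤ × ℤ => (p.1, -p.2)) '' Rp = Rn := by
    apply Set.Subset.antisymm
    · rintro p ⟨⟨x, y⟩, ⟨hxy, hy⟩, rfl⟩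
      exact ⟨by simpa using by linear_combination hxy, by simp only; omega⟩
    · rintro ⟨x, y⟩ ⟨hxy, hy⟩
      exact ⟨(x, -y), ⟨by simpa using by linear_combination hxy, by simp only; omega⟩,
        by simp⟩
  have hneginj : Function.Injective (fun p : ℤ × ℤ => (p.1, -p.2)) := by
    rintro ⟨x, y⟩ ⟨x', y'⟩ h
    simp only [Prod.mk.injEq] at h ⊢
    exact ⟨h.1, by omega⟩
  have hcardn : Rn.ncard = Rp.ncard := by
    rw [← hneg, Set.ncard_image_of_injective _ hneginj]
  have hcardR : R.ncard = 2 * Rp.ncard := by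
    rw [hsplit2, Set.ncard_union_eq hdisj2 hRpfin hRnfin, hcardn]; ring
  have hcardRge : Rge.ncard = Rp.ncard + R1.ncard := by
    rw [hsplit, Set.ncard_union_eq hdisj hRpfin hR1fin]
  -- conclude
  show 2 * T.ncard = r2 m + 2 * F.ncard
  have hr2 : r2 m = R.ncard := rfl
  rw [hcardT, hcardF, hcardRge, hr2, hcardR]
  ring
end

section
/- Fix integers b ≥ 2 and c with 0 < c < 3b - 3, with b odd. Then the total number of fixed points of S_{[c,b]} equals (1/2)·r₂(b² - 4c + 1) + |F^(1)_{[c,b]}|. -/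
lemma sumSq_bound (b : ℕ) (hb : 2 ≤ b) : ∀ a, b^2 ≤ a →
    ((Nat.digits b a).map (· ^ 2)).sum + 3*b ≤ a + 3 := by
  intro a
  induction a using Nat.strong_induction_on with
  | _ a ih =>
    intro ha
    have hb1 : 1 < b := hb
    have ha0 : 0 < a := by nlinarith
    rw [Nat.digits_def' hb1 ha0]
    have hdm : b * (a / b) + a % b = a := Nat.div_add_mod a b
    set q := a / b with hq
    set r := a % b with hr
    have hrb : r < b := Nat.mod_lt _ (by omega)
    have hqb : b ≤ q := by
      rw [hq, Nat.le_div_iff_mul_le (by omega : 0 < b)]; nlinarith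
    simp only [List.map_cons, List.sum_cons]
    by_cases hqq : b^2 ≤ q
    · have hqa : q < a := by nlinarith
      have IH := ih q hqa hqq
      have h1 : r*r + q ≤ b*q := by
        calc r*r + q ≤ r*q + q := by
              have := Nat.mul_le_mul_left r (show r ≤ q by omega)
              omega
          _ = (r+1)*q := by ring
          _ ≤ b*q := Nat.mul_le_mul_right q (by omega)
      have h2 : r^2 = r*r := sq r
      linarith [hdm]
    · have hq0 : 0 < q := by omega
      rw [Nat.digits_def' hb1 hq0]
      have hwq : b * (q / b) + q % b = q := Nat.div_add_mod q b
      set w := q / b with hwdef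
      set u := q % b with hudef
      have hub : u < b := Nat.mod_lt _ (by omega)
      have hw1 : 1 ≤ w := by
        rcases Nat.eq_zero_or_pos w with h|h
        · rw [h, Nat.mul_zero, Nat.zero_add] at hwq; omega
        · exact h
      have hwb : w < b := by nlinarith
      rw [Nat.digits_def' hb1 (by omega : 0 < w), Nat.mod_eq_of_lt hwb,
        Nat.div_eq_of_lt hwb, Nat.digits_zero]
      simp only [List.map_cons, List.map_nil, List.sum_cons, List.sum_nil]
      zify
      zify at hdm hwq hrb hub hw1 hwb
      nlinarith [mul_nonneg (sub_nonneg.2 (show (1:ℤ) ≤ w from hw1))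
          (show (0:ℤ) ≤ (b:ℤ)^2 - 1 - w by nlinarith),
        mul_nonneg (show (0:ℤ) ≤ (u:ℤ) by positivity)
          (show (0:ℤ) ≤ (b:ℤ) - u by omega),
        mul_nonneg (show (0:ℤ) ≤ (r:ℤ) by positivity)
          (show (0:ℤ) ≤ (b:ℤ) - 1 - r by omega),
        mul_nonneg (show (0:ℤ) ≤ (b:ℤ) - 1 - r by omega)
          (show (0:ℤ) ≤ (b:ℤ) - 2 by omega)]

lemma two_digit_mod (b u v : ℕ) (hb : 2 ≤ b) (hv : v < b) : (u * b + v) % b = v := by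
  rw [Nat.mul_add_mod' u b v, Nat.mod_eq_of_lt hv]

lemma two_digit_div (b u v : ℕ) (hb : 2 ≤ b) (hv : v < b) : (u * b + v) / b = u := by
  rw [Nat.add_comm, Nat.add_mul_div_right _ _ (by omega : 0 < b),
    Nat.div_eq_of_lt hv, Nat.zero_add]

lemma S_two_s14 (c b u v : ℕ) (hb : 2 ≤ b) (hu : 0 < u) (hub : u < b) (hv : v < b) :
    S c b (u * b + v) = c + (v ^ 2 + u ^ 2) := by
  have hb1 : 1 < b := hb
  have h0 : 0 < u * b + v := by positivity
  unfold S
  rw [Nat.digits_def' hb1 h0, two_digit_mod b u v hb hv, two_digit_div b u v hb hv,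
    Nat.digits_def' hb1 hu, Nat.mod_eq_of_lt hub, Nat.div_eq_of_lt hub, Nat.digits_zero]
  simp

lemma S_one (c b a : ℕ) (hb : 2 ≤ b) (h0 : 0 < a) (ha : a < b) :
    S c b a = c + a ^ 2 := by
  unfold S
  rw [Nat.digits_def' (show 1 < b from hb) h0, Nat.mod_eq_of_lt ha, Nat.div_eq_of_lt ha,
    Nat.digits_zero]
  simp

lemma odd_odd (x y D : ℤ) (h : x ^ 2 + y ^ 2 = D) (hD : D % 4 = 2) : Odd x ∧ Odd y := by
  rcases Int.even_or_odd x with ⟨k, hk⟩ | ⟨k, hk⟩ <;>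
    rcases Int.even_or_odd y with ⟨l, hl⟩ | ⟨l, hl⟩ <;> subst hk hl
  · exfalso
    have h1 : (k + k) ^ 2 = 4 * (k * k) := by ring
    have h2 : (l + l) ^ 2 = 4 * (l * l) := by ring
    rw [h1, h2] at h; generalize k * k = K at h; generalize l * l = L at h; omega
  · exfalso
    have h1 : (k + k) ^ 2 = 4 * (k * k) := by ring
    have h2 : (2 * l + 1) ^ 2 = 4 * (l * l + l) + 1 := by ring
    rw [h1, h2] at h; generalize k * k = K at h; generalize l * l + l = L at h; omega
  · exfalso
    have h1 : (2 * k + 1) ^ 2 = 4 * (k * k + k) + 1 := by ring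
    have h2 : (l + l) ^ 2 = 4 * (l * l) := by ring
    rw [h1, h2] at h; generalize k * k + k = K at h; generalize l * l = L at h; omega
  · exact ⟨⟨k, rfl⟩, ⟨l, rfl⟩⟩

theorem stmt_14 (c b : ℕ) (hb : 2 ≤ b) (hodd : Odd b)
    (hc1 : 0 < c) (hc2 : c < 3 * b - 3) :
    2 * Set.ncard {a : ℕ | 0 < a ∧ S c b a = a} =
      r2 ((b : ℤ) ^ 2 - 4 * c + 1) +
        2 * Set.ncard {a : ℕ | ∃ u : ℕ, 0 < u ∧ u < b ∧ a = u * b ∧ S c b a = a} := by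
  have hcb : c + 4 ≤ 3 * b := by omega
  set D : ℤ := (b : ℤ) ^ 2 - 4 * c + 1 with hDdef
  -- D ≡ 2 mod 4
  obtain ⟨m, hm⟩ := hodd
  have hbZ : (b : ℤ) = 2 * m + 1 := by exact_mod_cast hm
  have hD4 : D % 4 = 2 := by
    have h1 : D = 4 * (m * m + m - c) + 2 := by rw [hDdef, hbZ]; push_cast; ring
    omega
  -- the pair sets
  set T0 : Set (ℕ × ℕ) := {p | 0 < p.1 ∧ p.1 < b ∧ p.2 < b ∧
    c + p.1 ^ 2 + p.2 ^ 2 = p.1 * b + p.2 ∧ p.2 = 0} with hT0def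
  set T1 : Set (ℕ × ℕ) := {p | 0 < p.1 ∧ p.1 < b ∧ p.2 < b ∧
    c + p.1 ^ 2 + p.2 ^ 2 = p.1 * b + p.2 ∧ p.2 ≠ 0} with hT1def
  set f : ℕ × ℕ → ℕ := fun p => p.1 * b + p.2 with hfdef
  -- finiteness
  have hbox : (Set.Iio b ×ˢ Set.Iio b : Set (ℕ × ℕ)).Finite :=
    (Set.finite_Iio b).prod (Set.finite_Iio b)
  have hT0fin : T0.Finite := hbox.subset (fun p hp => ⟨hp.2.1, hp.2.2.1⟩)
  have hT1fin : T1.Finite := hbox.subset (fun p hp => ⟨hp.2.1, hp.2.2.1⟩)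
  -- injectivity of f on pairs with second coord < b
  have hinj : ∀ p q : ℕ × ℕ, p.2 < b → q.2 < b → f p = f q → p = q := by
    intro p q hp hq hfe
    have h1 : (p.1 * b + p.2) / b = p.1 := two_digit_div b p.1 p.2 hb hp
    have h2 : (q.1 * b + q.2) / b = q.1 := two_digit_div b q.1 q.2 hb hq
    have h3 : (p.1 * b + p.2) % b = p.2 := two_digit_mod b p.1 p.2 hb hp
    have h4 : (q.1 * b + q.2) % b = q.2 := two_digit_mod b q.1 q.2 hb hq
    have hfe' : p.1 * b + p.2 = q.1 * b + q.2 := hfe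
    ext
    · rw [← h1, ← h2, hfe']
    · rw [← h3, ← h4, hfe']
  -- the total fixed point set
  have hFix : {a : ℕ | 0 < a ∧ S c b a = a} = f '' (T0 ∪ T1) := by
    ext a
    constructor
    · rintro ⟨ha0, hfix⟩
      rcases lt_or_ge a b with hab | hab
      · exfalso
        rw [S_one c b a hb ha0 hab] at hfix
        nlinarith [sq_nonneg a, Nat.le_self_pow (two_ne_zero) a]
      rcases lt_or_ge a (b ^ 2) with hab2 | hab2
      · set u := a / b with hu
        set v := a % b with hv
        have hdm : b * u + v = a := Nat.div_add_mod a b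
        have hvb : v < b := Nat.mod_lt _ (by omega)
        have hu0 : 0 < u := Nat.div_pos hab (by omega)
        have hub : u < b := by
          rw [hu, Nat.div_lt_iff_lt_mul (by omega : 0 < b)]; nlinarith
        have haeq : a = u * b + v := by rw [Nat.mul_comm] at hdm; omega
        rw [haeq, S_two_s14 c b u v hb hu0 hub hvb] at hfix
        have heq : c + u ^ 2 + v ^ 2 = u * b + v := by
          linear_combination hfix
        rcases Nat.eq_zero_or_pos v with hv0 | hv0
        · exact ⟨(u, v), Or.inl ⟨hu0, hub, hvb, heq, hv0⟩, haeq.symm⟩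
        · exact ⟨(u, v), Or.inr ⟨hu0, hub, hvb, heq, by omega⟩, haeq.symm⟩
      · exfalso
        have := sumSq_bound b hb a hab2
        have hSa : c + ((Nat.digits b a).map (· ^ 2)).sum = a := hfix
        omega
    · rintro ⟨p, hp, rfl⟩
      have hp' : 0 < p.1 ∧ p.1 < b ∧ p.2 < b ∧ c + p.1 ^ 2 + p.2 ^ 2 = p.1 * b + p.2 := by
        rcases hp with h | h
        · exact ⟨h.1, h.2.1, h.2.2.1, h.2.2.2.1⟩
        · exact ⟨h.1, h.2.1, h.2.2.1, h.2.2.2.1⟩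
      obtain ⟨h1, h2, h3, h4⟩ := hp'
      refine ⟨by positivity, ?_⟩
      rw [show f p = p.1 * b + p.2 from rfl, S_two_s14 c b p.1 p.2 hb h1 h2 h3]
      linear_combination h4
  -- the second set
  have hSnd : {a : ℕ | ∃ u : ℕ, 0 < u ∧ u < b ∧ a = u * b ∧ S c b a = a} = f '' T0 := by
    ext a
    constructor
    · rintro ⟨u, hu0, hub, rfl, hfix⟩
      have h0 : u * b = u * b + 0 := by omega
      rw [h0, S_two_s14 c b u 0 hb hu0 hub (by omega)] at hfix
      exact ⟨(u, 0), ⟨hu0, hub, by omega, by linear_combination hfix, rfl⟩,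
        by simp [hfdef]⟩
    · rintro ⟨p, ⟨h1, h2, h3, h4, h5⟩, rfl⟩
      refine ⟨p.1, h1, h2, by simp [hfdef, h5], ?_⟩
      rw [show f p = p.1 * b + p.2 from rfl, S_two_s14 c b p.1 p.2 hb h1 h2 h3]
      linear_combination h4
  -- integer solution sets
  set A : Set (ℤ × ℤ) := {p | p.1 ^ 2 + p.2 ^ 2 = D} with hAdef
  set Ap : Set (ℤ × ℤ) := {p | p.1 ^ 2 + p.2 ^ 2 = D ∧ 0 < p.2} with hApdef
  set Am : Set (ℤ × ℤ) := {p | p.1 ^ 2 + p.2 ^ 2 = D ∧ p.2 < 0} with hAmdef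
  have hAfin : A.Finite := by
    have : A ⊆ Set.Icc (-(b:ℤ)) b ×ˢ Set.Icc (-(b:ℤ)) b := by
      rintro ⟨x, y⟩ h
      have h' : x ^ 2 + y ^ 2 = D := h
      constructor
      · constructor
        · nlinarith [sq_nonneg y]
        · nlinarith [sq_nonneg y]
      · constructor
        · nlinarith [sq_nonneg x]
        · nlinarith [sq_nonneg x]
    exact ((Set.finite_Icc _ _).prod (Set.finite_Icc _ _)).subset this
  have hAsplit : A = Ap ∪ Am := by
    ext ⟨x, y⟩
    constructor
    · intro h
      have h' : x ^ 2 + y ^ 2 = D := h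
      obtain ⟨_, hy⟩ := odd_odd x y D h' hD4
      obtain ⟨l, hl⟩ := hy
      rcases lt_or_ge 0 y with h0 | h0
      · exact Or.inl ⟨h', h0⟩
      · exact Or.inr ⟨h', by omega⟩
    · rintro (⟨h, _⟩ | ⟨h, _⟩) <;> exact h
  have hApAm : Disjoint Ap Am := by
    rw [Set.disjoint_left]
    rintro p ⟨_, h1⟩ ⟨_, h2⟩
    omega
  have hAmcard : Am.ncard = Ap.ncard := by
    have himg : Am = (fun p : ℤ × ℤ => (p.1, -p.2)) '' Ap := by
      ext ⟨x, y⟩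
      constructor
      · rintro ⟨h, hy⟩
        exact ⟨(x, -y), ⟨by simpa using h, by omega⟩, by simp⟩
      · rintro ⟨⟨x', y'⟩, ⟨h, hy⟩, heq⟩
        simp only [Prod.mk.injEq] at heq
        obtain ⟨rfl, rfl⟩ := heq
        exact ⟨by simpa using h, by omega⟩
    rw [himg, Set.ncard_image_of_injective _ (fun p q h => by
      simp only [Prod.mk.injEq] at h
      exact Prod.ext h.1 (by omega))]
  -- bijection between T1 and Ap
  set φ : ℕ × ℕ → ℤ × ℤ := fun p => (2 * (p.1 : ℤ) - b, 2 * (p.2 : ℤ) - 1) with hφdef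
  have hApT1 : Ap = φ '' T1 := by
    ext ⟨x, y⟩
    constructor
    · rintro ⟨h, hy⟩
      dsimp only at h hy
      obtain ⟨⟨k, hk⟩, ⟨l, hl⟩⟩ := odd_odd x y D h hD4
      rw [hDdef] at h
      have hy1 : 1 ≤ y := hy
      have hc1' : (1 : ℤ) ≤ (c : ℤ) := by exact_mod_cast hc1
      have hyy : (1 : ℤ) ≤ y ^ 2 := by nlinarith [hy1]
      have hxx : (0 : ℤ) ≤ x ^ 2 := sq_nonneg x
      have hx2 : x ^ 2 < (b : ℤ) ^ 2 := by linarith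
      have hy2 : y ^ 2 < (b : ℤ) ^ 2 := by linarith
      have hbpos : (0 : ℤ) ≤ b := by positivity
      obtain ⟨hxb', hxb⟩ := abs_lt_of_sq_lt_sq' hx2 hbpos
      obtain ⟨hyb', hyb⟩ := abs_lt_of_sq_lt_sq' hy2 hbpos
      set u : ℤ := k + m + 1 with hudefn
      set v : ℤ := l + 1 with hvdefn
      have hxu : x = 2 * u - b := by rw [hk, hbZ, hudefn]; ring
      have hyv : y = 2 * v - 1 := by rw [hl, hvdefn]; ring
      have hu1 : 1 ≤ u := by omega
      have hub : u < b := by omega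
      have hv1 : 1 ≤ v := by omega
      have hvb : v < b := by omega
      have h4 : 4 * ((c : ℤ) + u ^ 2 + v ^ 2) = 4 * (u * b + v) := by
        rw [hxu, hyv] at h
        linear_combination h
      have hZ : (c : ℤ) + u ^ 2 + v ^ 2 = u * b + v := by linarith
      refine ⟨(u.toNat, v.toNat), ⟨?_, ?_, ?_, ?_, ?_⟩, ?_⟩
      · omega
      · omega
      · omega
      · have hu' : (u.toNat : ℤ) = u := Int.toNat_of_nonneg (by omega)
        have hv' : (v.toNat : ℤ) = v := Int.toNat_of_nonneg (by omega)
        have : (c : ℤ) + (u.toNat : ℤ) ^ 2 + (v.toNat : ℤ) ^ 2 =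
            (u.toNat : ℤ) * b + v.toNat := by rw [hu', hv']; exact hZ
        exact_mod_cast this
      · omega
      · simp only [hφdef, Prod.mk.injEq]
        constructor <;> omega
    · rintro ⟨p, ⟨h1, h2, h3, h4, h5⟩, heq⟩
      rw [← heq]
      have hZ : (c : ℤ) + (p.1 : ℤ) ^ 2 + (p.2 : ℤ) ^ 2 = (p.1 : ℤ) * b + p.2 := by
        exact_mod_cast h4
      constructor
      · show (2 * (p.1 : ℤ) - b) ^ 2 + (2 * (p.2 : ℤ) - 1) ^ 2 = D
        rw [hDdef]; linear_combination 4 * hZ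
      · show (0 : ℤ) < 2 * (p.2 : ℤ) - 1
        omega
  have hφinj : Set.InjOn φ T1 := by
    intro p _ q _ h
    simp only [hφdef, Prod.mk.injEq] at h
    exact Prod.ext (by omega) (by omega)
  -- counting
  have hdisj01 : Disjoint T0 T1 := by
    rw [Set.disjoint_left]
    rintro p ⟨_, _, _, _, h1⟩ ⟨_, _, _, _, h2⟩
    exact h2 h1
  have hr2 : r2 D = Ap.ncard + Ap.ncard := by
    show A.ncard = _
    rw [hAsplit, Set.ncard_union_eq hApAm (hAfin.subset (by rw [hAsplit]; exact
      Set.subset_union_left)) (hAfin.subset (by rw [hAsplit]; exact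
      Set.subset_union_right)), hAmcard]
  have hfinj0 : Set.InjOn f (T0 ∪ T1) := by
    intro p hp q hq h
    apply hinj p q _ _ h
    · rcases hp with h' | h' <;> exact h'.2.2.1
    · rcases hq with h' | h' <;> exact h'.2.2.1
  rw [hFix, hSnd, Set.ncard_image_of_injOn hfinj0,
    Set.ncard_image_of_injOn (hfinj0.mono Set.subset_union_left),
    Set.ncard_union_eq hdisj01 hT0fin hT1fin, hr2,
    hApT1, Set.ncard_image_of_injOn hφinj]
  ring
end

section
/- Fix integers b ≥ 2 and c with 0 < c < 3b - 3, with b even. Then the total number of fixed points of S_{[c,b]} equals (1/4)·r₂(b² - 4c + 1) + |F^(1)_{[c,b]}|. -/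
/-! ### Auxiliary lemmas -/

/-- Sum of squares of base-`b` digits. -/
def fsq (b a : ℕ) : ℕ := ((Nat.digits b a).map (· ^ 2)).sum

lemma S_eq (c b a : ℕ) : S c b a = c + fsq b a := rfl

lemma fsq_rec {b : ℕ} (hb : 2 ≤ b) {a : ℕ} (ha : 0 < a) :
    fsq b a = (a % b) ^ 2 + fsq b (a / b) := by
  unfold fsq
  rw [Nat.digits_def' hb ha]
  simp

lemma fsq_single {b u : ℕ} (hb : 2 ≤ b) (h0 : 0 < u) (h1 : u < b) : fsq b u = u ^ 2 := by
  rw [fsq_rec hb h0, Nat.mod_eq_of_lt h1, Nat.div_eq_of_lt h1]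
  simp [fsq]

lemma two_mod {b u v : ℕ} (hv : v < b) : (u * b + v) % b = v := by
  rw [Nat.mul_add_mod' u b v, Nat.mod_eq_of_lt hv]

lemma two_div {b u v : ℕ} (hb : 0 < b) (hv : v < b) : (u * b + v) / b = u := by
  rw [mul_comm u b, Nat.mul_add_div hb, Nat.div_eq_of_lt hv]; omega

lemma fsq_two {b u v : ℕ} (hb : 2 ≤ b) (h0 : 0 < u) (h1 : u < b) (hv : v < b) :
    fsq b (u * b + v) = v ^ 2 + u ^ 2 := by
  have ha0 : 0 < u * b + v := by positivity
  rw [fsq_rec hb ha0, two_mod hv, two_div (by omega) hv, fsq_single hb h0 h1]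

lemma fsq_le (b : ℕ) (hb : 2 ≤ b) : ∀ a, b ^ 2 ≤ a → fsq b a + (3 * b - 3) ≤ a := by
  intro a
  induction a using Nat.strong_induction_on with
  | _ a ih =>
    intro ha
    have hb2 : 4 ≤ b ^ 2 := by nlinarith
    have ha0 : 0 < a := by omega
    set q := a / b with hqdef
    set r := a % b with hrdef
    have hr : r < b := Nat.mod_lt _ (by omega)
    have haqr : q * b + r = a := Nat.div_add_mod' a b
    have hfa : fsq b a = r ^ 2 + fsq b q := fsq_rec hb ha0
    have hq : b ≤ q := by
      rw [hqdef, Nat.le_div_iff_mul_le (by omega)]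
      nlinarith
    have hq0 : 0 < q := by omega
    by_cases hcase : q < b ^ 2
    · -- q has two digits
      set u := q / b with hudef
      set w := q % b with hwdef
      have hw : w < b := Nat.mod_lt _ (by omega)
      have hqu : u * b + w = q := Nat.div_add_mod' q b
      have hu1 : 1 ≤ u := by
        rw [hudef, Nat.le_div_iff_mul_le (by omega)]; omega
      have hu2 : u < b := by
        rw [hudef]; rw [Nat.div_lt_iff_lt_mul (by omega)]; nlinarith
      have hfq : fsq b q = w ^ 2 + u ^ 2 := by
        rw [fsq_rec hb hq0, ← hwdef, ← hudef, fsq_single hb (by omega) hu2]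
      have key : (r : ℤ) ^ 2 + (w ^ 2 + u ^ 2) + (3 * b - 3) ≤ (u * b + w) * b + r := by
        have h1 : ((u : ℤ) - 1) * (b ^ 2 - u - 1) ≥ 0 := by
          apply mul_nonneg
          · omega
          · nlinarith
        have h2 : (w : ℤ) * (b - w) ≥ 0 := by
          apply mul_nonneg <;> omega
        have h3 : ((b : ℤ) - 1 - r) * (r + b - 2) ≥ 0 := by
          apply mul_nonneg <;> omega
        nlinarith [h1, h2, h3]
      have keyn : r ^ 2 + (w ^ 2 + u ^ 2) + (3 * b - 3) ≤ (u * b + w) * b + r := by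
        have h3 : (3 : ℤ) * b - 3 = ((3 * b - 3 : ℕ) : ℤ) := by push_cast; omega
        rw [h3] at key
        exact_mod_cast key
      rw [hfa, hfq, ← haqr, ← hqu]
      exact keyn
    · -- q ≥ b ^ 2, use the induction hypothesis
      have hqa : q < a := by
        rw [hqdef]
        exact Nat.div_lt_self ha0 (by omega)
      have hih := ih q hqa (by omega)
      have hr2 : r ^ 2 ≤ q * (b - 1) + r := by
        have h1 : r ^ 2 ≤ r * (b - 1) := by
          rw [pow_two]; exact Nat.mul_le_mul_left r (by omega)
        have hqb : r * (b - 1) ≤ q * (b - 1) := Nat.mul_le_mul_right _ (by omega)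
        omega
      have hexp : q * b = q * (b - 1) + q := by
        have h1 : b - 1 + 1 = b := by omega
        calc q * b = q * (b - 1 + 1) := by rw [h1]
          _ = q * (b - 1) + q := by ring
      rw [hfa, ← haqr]
      omega

lemma even_sq {z : ℤ} (h : Even z) : Even (z ^ 2) := by
  rw [pow_two]; exact h.mul_right z

lemma fixed_range {c b a : ℕ} (hb : 2 ≤ b) (hc1 : 0 < c) (hc2 : c < 3 * b - 3)
    (ha : 0 < a) (hfix : S c b a = a) : b ≤ a ∧ a < b ^ 2 := by
  rw [S_eq] at hfix
  constructor
  · by_contra h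
    push_neg at h
    rw [fsq_single hb ha h] at hfix
    have : a ≤ a ^ 2 := Nat.le_self_pow two_ne_zero a
    omega
  · by_contra h
    push_neg at h
    have := fsq_le b hb a h
    omega

theorem stmt_15 (c b : ℕ) (hb : 2 ≤ b) (heven : Even b)
    (hc1 : 0 < c) (hc2 : c < 3 * b - 3) :
    4 * Set.ncard {a : ℕ | 0 < a ∧ S c b a = a} =
      r2 ((b : ℤ) ^ 2 - 4 * c + 1) +
        4 * Set.ncard {a : ℕ | ∃ u : ℕ, 0 < u ∧ u < b ∧ a = u * b ∧ S c b a = a} := by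
  obtain ⟨k, hk⟩ := heven
  set m : ℤ := (b : ℤ) ^ 2 - 4 * c + 1 with hm
  set A := {a : ℕ | 0 < a ∧ S c b a = a} with hA
  set B := {a : ℕ | ∃ u : ℕ, 0 < u ∧ u < b ∧ a = u * b ∧ S c b a = a} with hB
  set C := {a : ℕ | 0 < a ∧ S c b a = a ∧ a % b ≠ 0} with hC
  have hbk : (b : ℤ) = k + k := by exact_mod_cast hk
  -- basic facts about fixed points
  have hmem : ∀ a ∈ A, b ≤ a ∧ a < b ^ 2 :=
    fun a ha => fixed_range hb hc1 hc2 ha.1 ha.2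
  -- decomposition A = B ∪ C
  have hBsubA : B ⊆ A := by
    rintro a ⟨u, hu0, hub, rfl, hfix⟩
    exact ⟨by positivity, hfix⟩
  have hCsubA : C ⊆ A := fun a ha => ⟨ha.1, ha.2.1⟩
  have hunion : A = B ∪ C := by
    apply Set.Subset.antisymm
    · intro a ha
      by_cases h : a % b = 0
      · left
        obtain ⟨hba, hab2⟩ := hmem a ha
        refine ⟨a / b, ?_, ?_, ?_, ha.2⟩
        · exact Nat.div_pos hba (by omega)
        · rw [Nat.div_lt_iff_lt_mul (by omega)]; nlinarith
        · exact (Nat.div_mul_cancel (Nat.dvd_of_mod_eq_zero h)).symm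
      · right; exact ⟨ha.1, ha.2, h⟩
    · exact Set.union_subset hBsubA hCsubA
  have hdisj : Disjoint B C := by
    rw [Set.disjoint_left]
    rintro a ⟨u, hu0, hub, rfl, hfix⟩ hc
    exact hc.2.2 (by simp [Nat.mul_mod_left])
  have hAfin : A.Finite := by
    apply (Set.finite_Iio (b ^ 2)).subset
    intro a ha
    exact (hmem a ha).2
  have hBfin : B.Finite := hAfin.subset hBsubA
  have hCfin : C.Finite := hAfin.subset hCsubA
  have hcardA : A.ncard = B.ncard + C.ncard := by
    rw [hunion, Set.ncard_union_eq hdisj hBfin hCfin]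
  -- the sets of lattice points
  set T : Set (ℤ × ℤ) := {p : ℤ × ℤ | p.1 ^ 2 + p.2 ^ 2 = m} with hT
  set T1 : Set (ℤ × ℤ) := {p : ℤ × ℤ | p.1 ^ 2 + p.2 ^ 2 = m ∧ Even p.1} with hT1
  set T1p : Set (ℤ × ℤ) :=
    {p : ℤ × ℤ | p.1 ^ 2 + p.2 ^ 2 = m ∧ Even p.1 ∧ 0 < p.2} with hT1p
  have hr2T : r2 m = T.ncard := rfl
  have hm_odd : Odd m := ⟨2 * (k : ℤ) ^ 2 - 2 * c, by rw [hm, hbk]; ring⟩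
  have hmlt : m ≤ (b : ℤ) ^ 2 - 3 := by rw [hm]; omega
  have hparity : ∀ p : ℤ × ℤ, p.1 ^ 2 + p.2 ^ 2 = m → (Even p.1 ↔ Odd p.2) := by
    intro p hp
    have hodd : Odd (p.1 ^ 2 + p.2 ^ 2) := hp ▸ hm_odd
    rcases Int.even_or_odd p.1 with h1 | h1 <;> rcases Int.even_or_odd p.2 with h2 | h2
    · exfalso
      exact (Int.not_odd_iff_even.mpr ((even_sq h1).add (even_sq h2))) hodd
    · simp [h1, h2]
    · constructor
      · intro h; exact absurd h (Int.not_even_iff_odd.mpr h1)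
      · intro h; exact absurd h (Int.not_odd_iff_even.mpr h2)
    · exfalso
      exact (Int.not_odd_iff_even.mpr ((h1.pow).add_odd (h2.pow))) hodd
  have hsqlt : ∀ x : ℤ, x ^ 2 < (b : ℤ) ^ 2 → -b < x ∧ x < b := by
    intro x hx
    constructor
    · nlinarith [sq_nonneg (x + b)]
    · nlinarith [sq_nonneg (x - b)]
  have hboundT : ∀ p : ℤ × ℤ, p ∈ T → (-b < p.1 ∧ p.1 < b) ∧ (-b < p.2 ∧ p.2 < b) := by
    intro p hp
    have hp' : p.1 ^ 2 + p.2 ^ 2 = m := hp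
    constructor
    · exact hsqlt p.1 (by nlinarith [sq_nonneg p.2])
    · exact hsqlt p.2 (by nlinarith [sq_nonneg p.1])
  have hTfin : T.Finite := by
    apply Set.Finite.subset ((Set.finite_Icc (-(b : ℤ)) b).prod (Set.finite_Icc (-(b : ℤ)) b))
    intro p hp
    obtain ⟨⟨h1, h2⟩, h3, h4⟩ := hboundT p hp
    exact ⟨⟨by omega, by omega⟩, ⟨by omega, by omega⟩⟩
  have hT1sub : T1 ⊆ T := fun p hp => hp.1
  have hT1fin : T1.Finite := hTfin.subset hT1sub
  have hT1psub : T1p ⊆ T1 := fun p hp => ⟨hp.1, hp.2.1⟩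
  have hT1pfin : T1p.Finite := hT1fin.subset hT1psub
  -- step 1 : T = T1 ∪ swap '' T1
  have hTsplit : T = T1 ∪ Prod.swap '' T1 := by
    apply Set.Subset.antisymm
    · intro p hp
      have hp' : p.1 ^ 2 + p.2 ^ 2 = m := hp
      rcases Int.even_or_odd p.1 with h1 | h1
      · exact Or.inl ⟨hp', h1⟩
      · right
        refine ⟨Prod.swap p, ⟨?_, ?_⟩, Prod.swap_swap p⟩
        · simpa [add_comm] using hp'
        · simp only [Prod.fst_swap]
          rcases Int.even_or_odd p.2 with h2 | h2
          · exact h2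
          · exact absurd ((hparity p hp').mpr h2) (Int.not_even_iff_odd.mpr h1)
    · rintro p (hp | ⟨q, hq, rfl⟩)
      · exact hp.1
      · show (Prod.swap q).1 ^ 2 + (Prod.swap q).2 ^ 2 = m
        simpa [add_comm] using hq.1
  have hTdisj : Disjoint T1 (Prod.swap '' T1) := by
    rw [Set.disjoint_left]
    rintro p hp ⟨q, hq, rfl⟩
    have h1 : Odd q.2 := (hparity q hq.1).mp hq.2
    have h2 : Even q.2 := by simpa using hp.2
    exact (Int.not_odd_iff_even.mpr h2) h1
  have hcardT : T.ncard = 2 * T1.ncard := by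
    rw [hTsplit, Set.ncard_union_eq hTdisj hT1fin (hT1fin.image _),
      Set.ncard_image_of_injective _ Prod.swap_injective]
    omega
  -- step 2 : T1 = T1p ∪ neg '' T1p
  have hneginj : Function.Injective (fun p : ℤ × ℤ => (p.1, -p.2)) := by
    intro p q h
    simp only [Prod.mk.injEq] at h
    exact Prod.ext h.1 (by omega)
  have hT1split : T1 = T1p ∪ (fun p : ℤ × ℤ => (p.1, -p.2)) '' T1p := by
    apply Set.Subset.antisymm
    · intro p hp
      have hodd : Odd p.2 := (hparity p hp.1).mp hp.2
      have hne : p.2 ≠ 0 := by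
        rintro h0
        rw [h0] at hodd
        exact (Int.not_odd_iff_even.mpr Even.zero) hodd
      rcases lt_or_gt_of_ne hne with h | h
      · right
        refine ⟨(p.1, -p.2), ⟨?_, hp.2, by omega⟩, ?_⟩
        · show p.1 ^ 2 + (-p.2) ^ 2 = m
          rw [neg_pow]; simpa using hp.1
        · simp
      · exact Or.inl ⟨hp.1, hp.2, h⟩
    · rintro p (hp | ⟨q, hq, rfl⟩)
      · exact ⟨hp.1, hp.2.1⟩
      · constructor
        · show q.1 ^ 2 + (-q.2) ^ 2 = m
          rw [neg_pow]; simpa using hq.1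
        · exact hq.2.1
  have hT1disj : Disjoint T1p ((fun p : ℤ × ℤ => (p.1, -p.2)) '' T1p) := by
    rw [Set.disjoint_left]
    rintro p hp ⟨q, hq, rfl⟩
    have := hq.2.2
    have := hp.2.2
    simp only at this
    omega
  have hcardT1 : T1.ncard = 2 * T1p.ncard := by
    rw [hT1split, Set.ncard_union_eq hT1disj hT1pfin (hT1pfin.image _),
      Set.ncard_image_of_injective _ hneginj]
    omega
  -- step 3 : bijection between C and T1p
  set ψ : ℕ → ℤ × ℤ := fun a => ((2 * (a / b : ℕ) : ℤ) - b, (2 * (a % b : ℕ) : ℤ) - 1)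
    with hψ
  have hψinj : Set.InjOn ψ C := by
    intro a ha a' ha' h
    simp only [hψ, Prod.mk.injEq] at h
    have h1 : a / b = a' / b := by omega
    have h2 : a % b = a' % b := by omega
    have e1 : a / b * b + a % b = a := Nat.div_add_mod' a b
    have e2 : a' / b * b + a' % b = a' := Nat.div_add_mod' a' b
    rw [h1, h2] at e1
    omega
  have hψimg : ψ '' C = T1p := by
    apply Set.Subset.antisymm
    · rintro p ⟨a, ha, rfl⟩
      obtain ⟨ha0, hfix, hmod⟩ := ha
      obtain ⟨hba, hab2⟩ := fixed_range hb hc1 hc2 ha0 hfix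
      have hu1 : 1 ≤ a / b := Nat.div_pos hba (by omega)
      have hu2 : a / b < b := by
        rw [Nat.div_lt_iff_lt_mul (by omega)]; nlinarith only [hab2]
      have hv2 : a % b < b := Nat.mod_lt _ (by omega)
      have hav : a / b * b + a % b = a := Nat.div_add_mod' a b
      have hfq : S c b a = c + ((a % b) ^ 2 + (a / b) ^ 2) := by
        conv_lhs => rw [← hav]
        rw [S_eq, fsq_two hb (by omega) hu2 hv2]
      have heqn : c + ((a % b) ^ 2 + (a / b) ^ 2) = a / b * b + a % b := by
        rw [← hfq, hfix]; exact hav.symm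
      have heqz : (c : ℤ) + (((a % b : ℕ) : ℤ) ^ 2 + ((a / b : ℕ) : ℤ) ^ 2)
          = ((a / b : ℕ) : ℤ) * b + ((a % b : ℕ) : ℤ) := by exact_mod_cast heqn
      rw [hψ, hT1p]
      simp only [Set.mem_setOf_eq]
      refine ⟨?_, ?_, ?_⟩
      · rw [hm]
        linear_combination (4 : ℤ) * heqz
      · exact ⟨((a / b : ℕ) : ℤ) - k, by rw [hbk]; ring⟩
      · have : 1 ≤ a % b := by omega
        have : (1 : ℤ) ≤ ((a % b : ℕ) : ℤ) := by exact_mod_cast this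
        omega
    · rintro ⟨x, y⟩ hxy
      rw [hT1p] at hxy
      simp only [Set.mem_setOf_eq] at hxy
      obtain ⟨hpe, hx_even, hy_pos⟩ := hxy
      have hy_odd : Odd y := (hparity (x, y) hpe).mp hx_even
      obtain ⟨s, hs⟩ := hx_even
      obtain ⟨t, ht⟩ := hy_odd
      have hx2 : x ^ 2 < (b : ℤ) ^ 2 := by
        nlinarith only [hpe, hy_pos, hmlt, sq_nonneg (y - 1)]
      have hy2 : y ^ 2 < (b : ℤ) ^ 2 := by nlinarith only [hpe, hmlt, sq_nonneg x]
      obtain ⟨hxl, hxr⟩ := hsqlt x hx2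
      obtain ⟨hyl, hyr⟩ := hsqlt y hy2
      have hsk : 0 < s + (k : ℤ) := by omega
      have htp : 0 ≤ t := by omega
      obtain ⟨u, hu⟩ : ∃ u : ℕ, (u : ℤ) = s + k := ⟨(s + k).toNat, by omega⟩
      obtain ⟨v, hv⟩ : ∃ v : ℕ, (v : ℤ) = t + 1 := ⟨(t + 1).toNat, by omega⟩
      have hxu : x = 2 * (u : ℤ) - b := by omega
      have hyv : y = 2 * (v : ℤ) - 1 := by omega
      have hu1 : 1 ≤ u := by omega
      have hu2 : u < b := by omega
      have hv1 : 1 ≤ v := by omega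
      have hv2 : v < b := by omega
      have heqz : (c : ℤ) + ((v : ℤ) ^ 2 + (u : ℤ) ^ 2) = (u : ℤ) * b + v := by
        have h4 : (4 : ℤ) * ((c : ℤ) + ((v : ℤ) ^ 2 + (u : ℤ) ^ 2))
            = 4 * ((u : ℤ) * b + v) := by
          have hpe' : (2 * (u : ℤ) - b) ^ 2 + (2 * (v : ℤ) - 1) ^ 2 = m := by
            rw [← hxu, ← hyv]; exact hpe
          rw [hm] at hpe'
          linear_combination hpe'
        exact mul_left_cancel₀ (by norm_num) h4
      have heqn : c + (v ^ 2 + u ^ 2) = u * b + v := by exact_mod_cast heqz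
      have hfix : S c b (u * b + v) = u * b + v := by
        rw [S_eq, fsq_two hb (by omega) hu2 hv2, ← heqn]
      refine ⟨u * b + v, ⟨by positivity, hfix, ?_⟩, ?_⟩
      · rw [two_mod hv2]; omega
      · rw [hψ]
        simp only [two_mod hv2, two_div (show 0 < b by omega) hv2]
        rw [Prod.mk.injEq]
        constructor
        · omega
        · omega
  have hcardC : T1p.ncard = C.ncard := by
    rw [← hψimg, Set.ncard_image_of_injOn hψinj]
  -- assemble
  show 4 * A.ncard = r2 m + 4 * B.ncard
  rw [hr2T, hcardT, hcardT1, hcardC, hcardA]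
  ring
end

section
/- Fix integers c ≥ 0, b ≥ 2, and n ≥ 2. If S_{[c,b]} has a fixed point a with n + 1 base-b digits (that is, b^n ≤ a < b^{n+1}), then m_{b,n} ≤ c ≤ M_{b,n}, where m_{b,n} = b^n - b² + 3b - 3 and M_{b,n} = b^{n+1} - b² - (n-1)(b-1)² + (b - ⌊b/2⌋)·⌊b/2⌋. -/
lemma sum_getD (M : List ℕ) : M.sum = ∑ i ∈ Finset.range M.length, M.getD i 0 := by
  induction M with
  | nil => simp
  | cons h t ih =>
    rw [List.sum_cons, ih]
    simp [Finset.sum_range_succ', List.getD_cons_succ, List.getD_cons_zero, add_comm]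

lemma int_mul_pred (y : ℤ) : 0 ≤ y * (y - 1) := by
  rcases le_or_gt 1 y with h | h
  · nlinarith
  · nlinarith

set_option maxHeartbeats 1000000 in
theorem stmt_16 (c b n : ℕ) (hb : 2 ≤ b) (hn : 2 ≤ n) (a : ℕ)
    (ha1 : b ^ n ≤ a) (ha2 : a < b ^ (n + 1)) (hfix : S c b a = a) :
    (b : ℤ) ^ n - (b : ℤ) ^ 2 + 3 * b - 3 ≤ (c : ℤ) ∧
      (c : ℤ) ≤ (b : ℤ) ^ (n + 1) - (b : ℤ) ^ 2 - ((n : ℤ) - 1) * ((b : ℤ) - 1) ^ 2 +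
        ((b : ℤ) - ((b / 2 : ℕ) : ℤ)) * ((b / 2 : ℕ) : ℤ) := by
  obtain ⟨k, rfl⟩ : ∃ k, n = k + 2 := ⟨n - 2, by omega⟩
  have hb1 : 1 < b := hb
  have ha0 : a ≠ 0 := by
    have : 0 < b ^ (k + 2) := Nat.pow_pos (by omega)
    omega
  have hlen : (Nat.digits b a).length = k + 3 := by
    rw [Nat.digits_len b a hb1 ha0, Nat.log_eq_of_pow_le_of_lt_pow ha1 ha2]
  set L := Nat.digits b a with hL
  set d : ℕ → ℕ := fun i => L.getD i 0 with hd
  -- digits are < b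
  have hdb : ∀ i, i < k + 3 → d i < b := by
    intro i hi
    have hi' : i < L.length := by omega
    have : d i ∈ L := by
      show L.getD i 0 ∈ L
      rw [List.getD_eq_getElem _ 0 hi']
      exact List.getElem_mem hi'
    exact Nat.digits_lt_base hb1 this
  -- leading digit nonzero
  have hdn : 1 ≤ d (k + 2) := by
    have hlen' : (Nat.digits b a).length = k + 3 := hlen
    have h1 := Nat.getLast_digit_ne_zero b ha0
    rw [List.getLast_eq_getElem] at h1
    have h2 : d (k + 2) = (Nat.digits b a)[(Nat.digits b a).length - 1]'(by
        rw [hlen]; omega) := by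
      show L.getD (k + 2) 0 = _
      rw [List.getD_eq_getElem _ 0 (by omega : k + 2 < L.length)]
      congr 1
      omega
    rw [h2]
    exact Nat.one_le_iff_ne_zero.mpr h1
  -- a as a sum
  have h_a : a = ∑ i ∈ Finset.range (k + 3), d i * b ^ i := by
    conv_lhs => rw [← Nat.ofDigits_digits b a]
    rw [← hL, Nat.ofDigits_eq_sum_mapIdx, sum_getD, List.length_mapIdx, hlen]
    refine Finset.sum_congr rfl fun i hi => ?_
    have hi' : i < L.length := by rw [hlen]; exact Finset.mem_range.mp hi
    have hi'' : i < (L.mapIdx fun i a => a * b ^ i).length := by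
      rw [List.length_mapIdx]; exact hi'
    show (L.mapIdx fun i a => a * b ^ i).getD i 0 = L.getD i 0 * b ^ i
    rw [List.getD_eq_getElem _ 0 hi'', List.getD_eq_getElem _ 0 hi']
    simpa using List.get_mapIdx L (fun i a => a * b ^ i) i hi'
  -- sum of squares as a sum
  have h_sq : ((Nat.digits b a).map (· ^ 2)).sum = ∑ i ∈ Finset.range (k + 3), d i ^ 2 := by
    rw [← hL, sum_getD, List.length_map, hlen]
    refine Finset.sum_congr rfl fun i hi => ?_
    have hi' : i < L.length := by rw [hlen]; exact Finset.mem_range.mp hi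
    have hi'' : i < (L.map (· ^ 2)).length := by rw [List.length_map]; exact hi'
    show (L.map (· ^ 2)).getD i 0 = L.getD i 0 ^ 2
    rw [List.getD_eq_getElem _ 0 hi'', List.getD_eq_getElem _ 0 hi']
    simp
  -- c as an integer sum
  set F : ℕ → ℤ := fun i => (d i : ℤ) * (b : ℤ) ^ i - (d i : ℤ) ^ 2 with hF
  have hc : (c : ℤ) = ∑ i ∈ Finset.range (k + 3), F i := by
    have h1 : c + ((Nat.digits b a).map (· ^ 2)).sum = a := hfix
    rw [h_sq, h_a] at h1
    have h2 : (c : ℤ) + ∑ i ∈ Finset.range (k + 3), (d i : ℤ) ^ 2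
        = ∑ i ∈ Finset.range (k + 3), (d i : ℤ) * (b : ℤ) ^ i := by
      exact_mod_cast congrArg (Nat.cast : ℕ → ℤ) h1
    have h3 : ∑ i ∈ Finset.range (k + 3), F i
        = (∑ i ∈ Finset.range (k + 3), (d i : ℤ) * (b : ℤ) ^ i)
          - ∑ i ∈ Finset.range (k + 3), (d i : ℤ) ^ 2 := by
      rw [← Finset.sum_sub_distrib]
    rw [h3]; omega
  -- peel off indices 0, 1 and the top index
  have hsplit : ∑ i ∈ Finset.range (k + 3), F i
      = ((∑ i ∈ Finset.range k, F (i + 2)) + F (k + 2)) + F 1 + F 0 := by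
    rw [show k + 3 = (k + 1) + 1 + 1 from rfl, Finset.sum_range_succ',
      Finset.sum_range_succ', Finset.sum_range_succ]
  have hbZ : (2 : ℤ) ≤ (b : ℤ) := by exact_mod_cast hb
  have hFval : ∀ i, F i = (d i : ℤ) * (b : ℤ) ^ i - (d i : ℤ) ^ 2 := fun i => rfl
  have hdbZ : ∀ i, i < k + 3 → (0 : ℤ) ≤ (d i : ℤ) ∧ (d i : ℤ) ≤ (b : ℤ) - 1 := by
    intro i hi
    have := hdb i hi
    constructor
    · exact Int.natCast_nonneg _
    · push_cast; omega
  constructor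
  · -- lower bound
    have hF0 : -((b : ℤ) ^ 2 - 3 * b + 2) ≤ F 0 := by
      obtain ⟨h0', h0⟩ := hdbZ 0 (by omega)
      rw [hFval]
      nlinarith [mul_nonneg (sub_nonneg.mpr h0) (by linarith : (0:ℤ) ≤ (d 0 : ℤ) + ((b:ℤ) - 2))]
    have hF1 : (0 : ℤ) ≤ F 1 := by
      obtain ⟨h0', h0⟩ := hdbZ 1 (by omega)
      rw [hFval, pow_one]
      nlinarith
    have hFtop : (b : ℤ) ^ (k + 2) - 1 ≤ F (k + 2) := by
      obtain ⟨h0', h0⟩ := hdbZ (k + 2) (by omega)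
      have h1 : (1 : ℤ) ≤ (d (k + 2) : ℤ) := by exact_mod_cast hdn
      have hpow : (b : ℤ) ≤ (b : ℤ) ^ (k + 2) := by
        calc (b : ℤ) = (b:ℤ)^1 := (pow_one _).symm
        _ ≤ (b:ℤ)^(k+2) := pow_le_pow_right₀ (by omega) (by omega)
      rw [hFval]
      nlinarith [mul_nonneg (by linarith : (0:ℤ) ≤ (d (k+2) : ℤ) - 1)
        (by nlinarith : (0:ℤ) ≤ (b:ℤ)^(k+2) - (d (k+2) : ℤ) - 1)]
    have hmid : (0 : ℤ) ≤ ∑ i ∈ Finset.range k, F (i + 2) := by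
      apply Finset.sum_nonneg
      intro i hi
      have hik : i + 2 < k + 3 := by simp at hi; omega
      obtain ⟨h0', h0⟩ := hdbZ (i + 2) hik
      have hpow : (b : ℤ) ≤ (b : ℤ) ^ (i + 2) := by
        calc (b : ℤ) = (b:ℤ)^1 := (pow_one _).symm
        _ ≤ (b:ℤ)^(i+2) := pow_le_pow_right₀ (by omega) (by omega)
      rw [hFval]
      nlinarith
    rw [hc, hsplit]
    push_cast
    linarith
  · -- upper bound
    set h2 : ℤ := ((b / 2 : ℕ) : ℤ) with hh2
    have hF0 : F 0 ≤ 0 := by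
      rw [hFval, pow_zero]
      nlinarith [int_mul_pred (d 0 : ℤ)]
    have hF1 : F 1 ≤ ((b : ℤ) - h2) * h2 := by
      obtain ⟨h0', h0⟩ := hdbZ 1 (by omega)
      have hcase : h2 = (b:ℤ) - h2 ∨ h2 = (b:ℤ) - h2 - 1 := by
        rw [hh2]
        have h1 : b / 2 * 2 = b ∨ b / 2 * 2 + 1 = b := by omega
        rcases h1 with h1 | h1
        · left; push_cast; omega
        · right; push_cast; omega
      rw [hFval, pow_one]
      rcases hcase with hcs | hcs
      · nlinarith [sq_nonneg ((d 1 : ℤ) - h2)]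
      · nlinarith [int_mul_pred ((d 1 : ℤ) - h2)]
    have hmid : ∀ i ∈ Finset.range (k + 1),
        F (i + 2) ≤ ((b:ℤ) - 1) * ((b:ℤ)^(i+2) - ((b:ℤ) - 1)) := by
      intro i hi
      have hik : i + 2 < k + 3 := by simp at hi; omega
      obtain ⟨h0', h0⟩ := hdbZ (i + 2) hik
      have hpow : (b : ℤ)^2 ≤ (b : ℤ) ^ (i + 2) := pow_le_pow_right₀ (by omega) (by omega)
      rw [hFval]
      nlinarith [mul_nonneg (by linarith : (0:ℤ) ≤ ((b:ℤ) - 1) - (d (i+2) : ℤ))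
        (by nlinarith : (0:ℤ) ≤ (b:ℤ)^(i+2) - ((b:ℤ) - 1) - (d (i+2) : ℤ))]
    have hgeom : ((b:ℤ) - 1) * ∑ i ∈ Finset.range (k + 1), (b:ℤ)^i = (b:ℤ)^(k+1) - 1 := by
      have := geom_sum_mul (b : ℤ) (k + 1)
      linarith
    have hsum : ∑ i ∈ Finset.range (k + 1), ((b:ℤ) - 1) * ((b:ℤ)^(i+2) - ((b:ℤ) - 1))
        = (b:ℤ)^(k+3) - (b:ℤ)^2 - ((k:ℤ)+1) * ((b:ℤ)-1)^2 := by
      have he : ∀ i, ((b:ℤ) - 1) * ((b:ℤ)^(i+2) - ((b:ℤ) - 1))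
          = (b:ℤ)^2 * (((b:ℤ)-1) * (b:ℤ)^i) - ((b:ℤ)-1)^2 := by
        intro i; ring
      simp only [he, Finset.sum_sub_distrib, ← Finset.mul_sum, Finset.sum_const,
        Finset.card_range, nsmul_eq_mul, hgeom]
      push_cast
      ring
    have htop : (∑ i ∈ Finset.range k, F (i + 2)) + F (k + 2)
        ≤ (b:ℤ)^(k+3) - (b:ℤ)^2 - ((k:ℤ)+1) * ((b:ℤ)-1)^2 := by
      have := Finset.sum_le_sum hmid
      rw [hsum] at this
      rw [← Finset.sum_range_succ] at *
      exact this
    rw [hc, hsplit]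
    push_cast
    linarith
end

section
/- Fix integers b ≥ 2 and n ≥ 2. The bounds m_{b,n} and M_{b,n} are sharp: for c = m_{b,n} = b^n - b² + 3b - 3, the number a = b^n + (b - 1) satisfies b^n ≤ a < b^{n+1} and is a fixed point of S_{[c,b]}; and for c = M_{b,n} = b^{n+1} - b² - (n-1)(b-1)² + (b - ⌊b/2⌋)·⌊b/2⌋, the number a = (b-1)·(b² + b³ + ⋯ + b^n) + ⌊b/2⌋·b satisfies b^n ≤ a < b^{n+1} and is a fixed point of S_{[c,b]}. -/
lemma ofDigits_replicate_zero (b k : ℕ) : Nat.ofDigits b (List.replicate k 0) = 0 := by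
  induction k with
  | zero => simp
  | succ k ih => simp [List.replicate_succ, Nat.ofDigits_cons, ih]

lemma ofDigits_replicate_pred (b k : ℕ) (hb : 1 ≤ b) :
    Nat.ofDigits b (List.replicate k (b - 1)) + 1 = b ^ k := by
  induction k with
  | zero => simp
  | succ k ih =>
    rw [List.replicate_succ, Nat.ofDigits_cons, pow_succ']
    calc b - 1 + b * Nat.ofDigits b (List.replicate k (b - 1)) + 1
        = (b - 1 + 1) + b * Nat.ofDigits b (List.replicate k (b - 1)) := by ring
      _ = b * (Nat.ofDigits b (List.replicate k (b - 1)) + 1) := by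
          rw [Nat.sub_add_cancel hb]; ring
      _ = b * b ^ k := by rw [ih]

lemma geo (b : ℕ) (hb : 1 ≤ b) : ∀ n, 1 ≤ n →
    (b - 1) * (∑ i ∈ Finset.Icc 2 n, b ^ i) + b ^ 2 = b ^ (n + 1) := by
  intro n hn
  induction n with
  | zero => omega
  | succ m ih =>
    rcases Nat.eq_or_lt_of_le hn with h | h
    · simp [← h]
    · have hm : 1 ≤ m := by omega
      rw [Finset.sum_Icc_succ_top (by omega), Nat.mul_add]
      have : (b - 1) * b ^ (m + 1) + b ^ (m+1) = b ^ (m + 2) := by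
        have : (b - 1 + 1) * b ^ (m + 1) = b ^ (m + 2) := by
          rw [Nat.sub_add_cancel hb]; ring
        calc (b - 1) * b ^ (m + 1) + b ^ (m+1) = (b - 1 + 1) * b^(m+1) := by ring
          _ = b ^ (m+2) := this
      have h2 := ih hm
      linarith

theorem stmt_17 (b n : ℕ) (hb : 2 ≤ b) (hn : 2 ≤ n) (c₁ c₂ : ℕ)
    (hc₁ : (c₁ : ℤ) = (b : ℤ) ^ n - (b : ℤ) ^ 2 + 3 * b - 3)
    (hc₂ : (c₂ : ℤ) = (b : ℤ) ^ (n + 1) - (b : ℤ) ^ 2 - ((n : ℤ) - 1) * ((b : ℤ) - 1) ^ 2 +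
      ((b : ℤ) - ((b / 2 : ℕ) : ℤ)) * ((b / 2 : ℕ) : ℤ)) :
    (b ^ n ≤ b ^ n + (b - 1) ∧ b ^ n + (b - 1) < b ^ (n + 1) ∧
      S c₁ b (b ^ n + (b - 1)) = b ^ n + (b - 1)) ∧
    (b ^ n ≤ (b - 1) * (∑ i ∈ Finset.Icc 2 n, b ^ i) + (b / 2) * b ∧
      (b - 1) * (∑ i ∈ Finset.Icc 2 n, b ^ i) + (b / 2) * b < b ^ (n + 1) ∧
      S c₂ b ((b - 1) * (∑ i ∈ Finset.Icc 2 n, b ^ i) + (b / 2) * b) =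
        (b - 1) * (∑ i ∈ Finset.Icc 2 n, b ^ i) + (b / 2) * b) := by
  have hb1 : 1 ≤ b := by omega
  have hn1 : 1 ≤ n := by omega
  have hbb : 1 < b := hb
  have hble : b ≤ b ^ n := Nat.le_self_pow (by omega) b
  have hb2n : b ^ 2 ≤ b ^ n := Nat.pow_le_pow_right (by omega) hn
  have h2bn : 2 * b ^ n ≤ b ^ (n + 1) := by
    calc 2 * b ^ n ≤ b * b ^ n := Nat.mul_le_mul_right _ hb
      _ = b ^ (n + 1) := (pow_succ' b n).symm
  have hgeo := geo b hb1 n hn1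
  -- digits of a₁ = b^n + (b-1)
  have hof1 : Nat.ofDigits b ((b - 1) :: (List.replicate (n - 1) 0 ++ [1])) =
      b ^ n + (b - 1) := by
    simp [Nat.ofDigits_cons, Nat.ofDigits_append, ofDigits_replicate_zero, Nat.ofDigits_nil]
    have : b * b ^ (n - 1) = b ^ n := by
      rw [← pow_succ']; congr 1; omega
    omega
  have hdig1 : Nat.digits b (b ^ n + (b - 1)) = (b - 1) :: (List.replicate (n - 1) 0 ++ [1]) := by
    rw [← hof1]
    apply Nat.digits_ofDigits b hbb
    · intro x hx
      simp [List.mem_replicate] at hx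
      rcases hx with h | h | h <;> omega
    · intro h
      have heq : ((b - 1) :: (List.replicate (n - 1) 0 ++ [1])) =
          ((b - 1) :: List.replicate (n - 1) 0) ++ [1] := by simp
      simp only [heq] at h ⊢
      simp [List.getLast_append]
  -- digits of a₂
  have hX := ofDigits_replicate_pred b (n - 1) hb1
  have hof2 : Nat.ofDigits b (0 :: (b / 2) :: List.replicate (n - 1) (b - 1)) =
      (b - 1) * (∑ i ∈ Finset.Icc 2 n, b ^ i) + (b / 2) * b := by
    simp only [Nat.ofDigits_cons, Nat.cast_zero]
    have h1 : b ^ 2 * (Nat.ofDigits b (List.replicate (n - 1) (b - 1)) + 1) = b ^ (n + 1) := by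
      rw [hX, ← pow_add]; congr 1; omega
    have h2 : b * (↑(b / 2) + b * Nat.ofDigits b (List.replicate (n - 1) (b - 1))) =
        b * (b / 2) + b ^ 2 * Nat.ofDigits b (List.replicate (n - 1) (b - 1)) := by ring
    have h3 : b ^ 2 * (Nat.ofDigits b (List.replicate (n - 1) (b - 1)) + 1) =
        b ^ 2 * Nat.ofDigits b (List.replicate (n - 1) (b - 1)) + b ^ 2 := by ring
    have h4 : b * (b / 2) = (b / 2) * b := by ring
    linarith
  have hdig2 : Nat.digits b ((b - 1) * (∑ i ∈ Finset.Icc 2 n, b ^ i) + (b / 2) * b) =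
      0 :: (b / 2) :: List.replicate (n - 1) (b - 1) := by
    rw [← hof2]
    apply Nat.digits_ofDigits b hbb
    · intro x hx
      simp [List.mem_replicate] at hx
      rcases hx with h | h | h <;> omega
    · intro h
      have hrep : List.replicate (n - 1) (b - 1) = List.replicate (n - 2) (b - 1) ++ [b - 1] := by
        have : n - 1 = (n - 2) + 1 := by omega
        rw [this, List.replicate_succ']
      have heq : ((0:ℕ) :: (b / 2) :: List.replicate (n - 1) (b - 1)) =
          ((0:ℕ) :: (b / 2) :: List.replicate (n - 2) (b - 1)) ++ [b - 1] := by
        rw [hrep]; simp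
      simp only [heq] at h ⊢
      simp [List.getLast_append]
      omega
  refine ⟨⟨Nat.le_add_right _ _, by omega, ?_⟩, ?_, ?_, ?_⟩
  · -- fixed point 1
    unfold S
    rw [hdig1]
    have hsum : (((b - 1) :: (List.replicate (n - 1) 0 ++ [1])).map (· ^ 2)).sum =
        (b - 1) ^ 2 + 1 := by
      simp [List.map_replicate, List.sum_replicate]
    rw [hsum]
    have : (c₁ : ℤ) + ((b - 1) ^ 2 + 1) = ((b ^ n + (b - 1) : ℕ) : ℤ) := by
      push_cast [Nat.cast_sub hb1]
      rw [hc₁]; ring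
    have := this
    zify [hb1] at this ⊢
    linarith
  · -- lower bound 2
    have h6 : b ^ n + b ^ 2 ≤ (b - 1) * (∑ i ∈ Finset.Icc 2 n, b ^ i) + b ^ 2 := by
      rw [hgeo]; linarith
    have h7 := Nat.le_of_add_le_add_right h6
    exact le_trans h7 (Nat.le_add_right _ _)
  · -- upper bound 2
    have hhalf : (b / 2) * b < b ^ 2 := by
      have h5 : b / 2 < b := by omega
      calc (b / 2) * b < b * b := Nat.mul_lt_mul_of_lt_of_le h5 le_rfl (by omega)
        _ = b ^ 2 := (sq b).symm
    linarith [hgeo]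
  · -- fixed point 2
    unfold S
    rw [hdig2]
    have hsum : (((0 : ℕ) :: (b / 2) :: List.replicate (n - 1) (b - 1)).map (· ^ 2)).sum =
        (b / 2) ^ 2 + (n - 1) * (b - 1) ^ 2 := by
      simp [List.map_replicate, List.sum_replicate, smul_eq_mul]
    rw [hsum]
    have hgz : ((b : ℤ) - 1) * (∑ i ∈ Finset.Icc 2 n, (b : ℤ) ^ i) + (b : ℤ) ^ 2 =
        (b : ℤ) ^ (n + 1) := by
      have := hgeo
      zify [hb1] at this
      convert this using 2
    zify [hb1, hn1]
    push_cast at hc₂ ⊢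
    linear_combination hc₂ - hgz
end

section
/- Fix integers b ≥ 2 and n ≥ 2. Then m_{b,n+1} - M_{b,n} - 1 > (n - 5/4)·(b-1)², and for every integer c with M_{b,n} < c < m_{b,n+1}, the function S_{[c,b]} has no fixed point; in particular the k = m_{b,n+1} - M_{b,n} - 1 consecutive values c = M_{b,n}+1, …, m_{b,n+1}-1 form a k-desert base b. -/
def sqsum (l : List ℕ) : ℤ := ((l.map (· ^ 2)).sum : ℕ)

@[simp] lemma sqsum_nil : sqsum [] = 0 := rfl

lemma sqsum_cons (d : ℕ) (t : List ℕ) : sqsum (d :: t) = (d : ℤ) ^ 2 + sqsum t := by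
  simp only [sqsum, List.map_cons, List.sum_cons, Nat.cast_add, Nat.cast_pow]

/-- per-digit upper bound for positions `i ≥ 2` -/
lemma tail_ub (b : ℕ) (hb : 2 ≤ b) :
    ∀ (l : List ℕ), (∀ d ∈ l, d < b) → ∀ i : ℕ, 2 ≤ i →
    Nat.ofDigits (b : ℤ) l * (b : ℤ) ^ i - sqsum l ≤
      (b : ℤ) ^ (i + l.length) - (b : ℤ) ^ i - l.length * ((b : ℤ) - 1) ^ 2 := by
  intro l
  induction l with
  | nil => intro _ i _; simp [show Nat.ofDigits ((b:ℤ)) [] = 0 from rfl, sqsum]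
  | cons d t ih =>
    intro hl i hi
    have hd : d < b := hl d List.mem_cons_self
    have ht := ih (fun x hx => hl x (List.mem_cons_of_mem d hx)) (i + 1) (by omega)
    have hdZ : (d : ℤ) ≤ (b : ℤ) - 1 := by omega
    have hd0 : (0 : ℤ) ≤ d := Int.natCast_nonneg d
    have hbZ : (2 : ℤ) ≤ b := by exact_mod_cast hb
    have hpow : (b : ℤ) ^ 2 ≤ (b : ℤ) ^ i := pow_le_pow_right₀ (by linarith) hi
    -- d * b^i - d^2 ≤ (b-1) * b^i - (b-1)^2
    have key : (d : ℤ) * (b : ℤ) ^ i - (d : ℤ) ^ 2 ≤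
        ((b : ℤ) - 1) * (b : ℤ) ^ i - ((b : ℤ) - 1) ^ 2 := by
      nlinarith [mul_nonneg (sub_nonneg.mpr hdZ) (by nlinarith : (0:ℤ) ≤ (b:ℤ)^i - ((b:ℤ) - 1 + d))]
    rw [show Nat.ofDigits ((b:ℤ)) (d :: t) = (d : ℤ) + (b : ℤ) * Nat.ofDigits (b:ℤ) t from rfl, sqsum_cons]
    have expand : ((d : ℤ) + (b : ℤ) * Nat.ofDigits (b : ℤ) t) * (b : ℤ) ^ i =
        (d : ℤ) * (b : ℤ) ^ i + Nat.ofDigits (b : ℤ) t * (b : ℤ) ^ (i + 1) := by ring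
    rw [expand]
    have e2 : (b : ℤ) ^ (i + (d :: t).length) = (b : ℤ) ^ (i + 1 + t.length) := by
      rw [List.length_cons]; ring_nf
    rw [e2, List.length_cons]
    push_cast
    have e3 : ((b : ℤ) - 1) * (b : ℤ) ^ i - ((b:ℤ)-1)^2 + ((b:ℤ)^(i+1+t.length) - (b:ℤ)^(i+1) - t.length * ((b:ℤ)-1)^2)
        = (b:ℤ)^(i+1+t.length) - (b:ℤ)^i - (t.length + 1) * ((b:ℤ)-1)^2 := by
      have : (b:ℤ)^(i+1) = (b:ℤ)^i * b := by ring
      rw [this]; ring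
    linarith [e3 ▸ add_le_add key ht]

/-- lower bound for a digit list with nonzero last digit, at position `i ≥ 1` -/
lemma tail_lb (b : ℕ) (hb : 2 ≤ b) :
    ∀ (l : List ℕ), (∀ d ∈ l, d < b) → ∀ hne : l ≠ [], l.getLast hne ≠ 0 → ∀ i : ℕ, 1 ≤ i →
    (b : ℤ) ^ (i + l.length - 1) - 1 ≤ Nat.ofDigits (b : ℤ) l * (b : ℤ) ^ i - sqsum l := by
  intro l
  induction l with
  | nil => intro _ hne; exact absurd rfl hne
  | cons d t ih =>
    intro hl hne hlast i hi
    have hd : d < b := hl d List.mem_cons_self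
    have hbZ : (2 : ℤ) ≤ b := by exact_mod_cast hb
    have hd0 : (0 : ℤ) ≤ d := Int.natCast_nonneg d
    have hdZ : (d : ℤ) ≤ (b : ℤ) - 1 := by omega
    have hpow : (b : ℤ) ≤ (b : ℤ) ^ i := by
      calc (b : ℤ) = (b : ℤ) ^ 1 := (pow_one _).symm
      _ ≤ (b : ℤ) ^ i := pow_le_pow_right₀ (by linarith) hi
    rw [show Nat.ofDigits ((b:ℤ)) (d :: t) = (d : ℤ) + (b : ℤ) * Nat.ofDigits (b:ℤ) t from rfl,
      sqsum_cons]
    rcases t with _ | ⟨d', t'⟩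
    · -- singleton: d is the last digit, d ≥ 1
      have hd1 : 1 ≤ d := by
        have : d ≠ 0 := by simpa using hlast
        omega
      have hd1Z : (1 : ℤ) ≤ d := by exact_mod_cast hd1
      simp only [show Nat.ofDigits ((b:ℤ)) ([] : List ℕ) = 0 from rfl, sqsum_nil,
        List.length_cons, List.length_nil]
      have : i + 1 - 1 = i := by omega
      rw [this]
      nlinarith [mul_nonneg (sub_nonneg.mpr hd1Z) (by nlinarith : (0:ℤ) ≤ (b:ℤ)^i - (d:ℤ) - 1)]
    · have hne' : (d' :: t') ≠ [] := by simp
      have hlast' : (d' :: t').getLast hne' ≠ 0 := by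
        rwa [List.getLast_cons hne'] at hlast
      have ht := ih (fun x hx => hl x (List.mem_cons_of_mem d hx)) hne' hlast' (i + 1) (by omega)
      have hnonneg : (0:ℤ) ≤ (d : ℤ) * (b : ℤ) ^ i - (d : ℤ) ^ 2 := by
        nlinarith [mul_nonneg hd0 (by nlinarith : (0:ℤ) ≤ (b:ℤ)^i - (d:ℤ))]
      have eidx : i + 1 + (d' :: t').length - 1 = i + (d :: d' :: t').length - 1 := by
        simp; omega
      rw [eidx] at ht
      have expand : ((d : ℤ) + (b : ℤ) * Nat.ofDigits (b:ℤ) (d' :: t')) * (b : ℤ) ^ i =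
          (d : ℤ) * (b : ℤ) ^ i + Nat.ofDigits (b:ℤ) (d' :: t') * (b : ℤ) ^ (i + 1) := by ring
      rw [expand]
      linarith

/-- monotonicity of `t ↦ b^(t+2) - t*(b-1)^2` -/
lemma Pmono (b : ℕ) (hb : 2 ≤ b) : ∀ s t : ℕ, t ≤ s →
    (b : ℤ) ^ (t + 2) - t * ((b : ℤ) - 1) ^ 2 ≤ (b : ℤ) ^ (s + 2) - s * ((b : ℤ) - 1) ^ 2 := by
  intro s
  induction s with
  | zero =>
    intro t ht
    have : t = 0 := by omega
    subst this
    exact le_refl _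
  | succ s ih =>
    intro t ht
    have hbZ : (2 : ℤ) ≤ b := by exact_mod_cast hb
    rcases le_or_gt t s with h | h
    · refine le_trans (ih t h) ?_
      have hpow : (b : ℤ) ≤ (b : ℤ) ^ (s + 2) := by
        calc (b : ℤ) = (b : ℤ) ^ 1 := (pow_one _).symm
        _ ≤ (b : ℤ) ^ (s + 2) := pow_le_pow_right₀ (by linarith) (by omega)
      have : (b : ℤ) ^ (s + 1 + 2) = (b : ℤ) ^ (s + 2) * b := by ring
      rw [this]
      push_cast
      nlinarith
    · have : t = s + 1 := by omega
      subst this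
      exact le_refl _

lemma upper_bound (b n : ℕ) (hb : 2 ≤ b) (hn : 2 ≤ n) (l : List ℕ)
    (hl : ∀ d ∈ l, d < b) (hlen : l.length ≤ n + 1) :
    Nat.ofDigits (b : ℤ) l - sqsum l ≤
      (b : ℤ) ^ (n + 1) - (b : ℤ) ^ 2 - ((n : ℤ) - 1) * ((b : ℤ) - 1) ^ 2 +
        ((b : ℤ) - ((b / 2 : ℕ) : ℤ)) * ((b / 2 : ℕ) : ℤ) := by
  have hbZ : (2 : ℤ) ≤ b := by exact_mod_cast hb
  set H : ℤ := ((b / 2 : ℕ) : ℤ) with hH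
  have hH1 : 2 * H ≤ (b : ℤ) := by omega
  have hH2 : (b : ℤ) ≤ 2 * H + 1 := by omega
  have hH0 : 0 ≤ H := by omega
  -- the "P" part is nonnegative
  have hPM : (0 : ℤ) ≤ (b : ℤ) ^ (n + 1) - (b : ℤ) ^ 2 - ((n : ℤ) - 1) * ((b : ℤ) - 1) ^ 2 := by
    have := Pmono b hb (n - 1) 0 (by omega)
    have e : (n - 1) + 2 = n + 1 := by omega
    rw [e] at this
    have e2 : ((n - 1 : ℕ) : ℤ) = (n : ℤ) - 1 := by omega
    rw [e2] at this
    norm_num at this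
    linarith
  have hHb : 0 ≤ ((b : ℤ) - H) * H := mul_nonneg (by omega) hH0
  rcases l with _ | ⟨d0, t0⟩
  · simp [show Nat.ofDigits ((b:ℤ)) ([] : List ℕ) = 0 from rfl]
    linarith
  rcases t0 with _ | ⟨d1, t⟩
  · -- one digit
    have hd0 : (d0 : ℤ) ≤ (d0 : ℤ) ^ 2 := by
      exact_mod_cast Nat.le_self_pow two_ne_zero d0
    rw [show Nat.ofDigits ((b:ℤ)) [d0] = (d0 : ℤ) + (b:ℤ) * Nat.ofDigits (b:ℤ) [] from rfl,
      sqsum_cons]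
    simp only [show Nat.ofDigits ((b:ℤ)) ([] : List ℕ) = 0 from rfl, sqsum_nil]
    linarith
  · -- at least two digits
    have hd0 : d0 < b := hl d0 (by simp)
    have hd1 : d1 < b := hl d1 (by simp)
    have hlt : ∀ d ∈ t, d < b := fun d hd => hl d (by simp [hd])
    have hd0sq : (d0 : ℤ) ≤ (d0 : ℤ) ^ 2 := by
      exact_mod_cast Nat.le_self_pow two_ne_zero d0
    -- digit at position 1 bound
    have hmid : (d1 : ℤ) * b - (d1 : ℤ) ^ 2 ≤ ((b : ℤ) - H) * H := by
      have hd1Z : (d1 : ℤ) ≤ (b : ℤ) - 1 := by omega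
      have hd1Z0 : (0 : ℤ) ≤ d1 := by positivity
      rcases le_or_gt d1 (b / 2) with h | h
      · have h' : (d1 : ℤ) ≤ H := by omega
        nlinarith [mul_nonneg (by omega : (0:ℤ) ≤ H - d1) (by omega : (0:ℤ) ≤ (b:ℤ) - H - d1)]
      · have h' : H + 1 ≤ (d1 : ℤ) := by omega
        nlinarith [mul_nonneg (by omega : (0:ℤ) ≤ (d1:ℤ) - H) (by omega : (0:ℤ) ≤ (d1:ℤ) + H - b)]
    -- tail bound
    have htail := tail_ub b hb t hlt 2 le_rfl
    have hmono := Pmono b hb (n - 1) t.length (by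
      have := hlen
      simp only [List.length_cons] at this ⊢
      omega)
    have e : t.length + 2 = 2 + t.length := by omega
    rw [← e] at htail
    have e2 : (n - 1) + 2 = n + 1 := by omega
    rw [e2] at hmono
    have e3 : ((n - 1 : ℕ) : ℤ) = (n : ℤ) - 1 := by omega
    rw [e3] at hmono
    have expand : Nat.ofDigits ((b:ℤ)) (d0 :: d1 :: t) =
        (d0 : ℤ) + (b : ℤ) * d1 + Nat.ofDigits (b:ℤ) t * (b : ℤ) ^ 2 := by
      rw [show Nat.ofDigits ((b:ℤ)) (d0 :: d1 :: t)
          = (d0 : ℤ) + (b:ℤ) * ((d1 : ℤ) + (b:ℤ) * Nat.ofDigits (b:ℤ) t) from rfl]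
      ring
    rw [expand, sqsum_cons, sqsum_cons]
    linarith

lemma lower_bound (b n : ℕ) (hb : 2 ≤ b) (l : List ℕ)
    (hl : ∀ d ∈ l, d < b) (hne : l ≠ []) (hlast : l.getLast hne ≠ 0)
    (hlen : n + 2 ≤ l.length) :
    (b : ℤ) ^ (n + 1) - (b : ℤ) ^ 2 + 3 * b - 3 ≤ Nat.ofDigits (b : ℤ) l - sqsum l := by
  have hbZ : (2 : ℤ) ≤ b := by exact_mod_cast hb
  rcases l with _ | ⟨d0, t⟩
  · exact absurd rfl hne
  have htne : t ≠ [] := by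
    intro h
    rw [h] at hlen
    simp at hlen
  have hlast' : t.getLast htne ≠ 0 := by
    rwa [List.getLast_cons htne] at hlast
  have hlt : ∀ d ∈ t, d < b := fun d hd => hl d (by simp [hd])
  have ht := tail_lb b hb t hlt htne hlast' 1 le_rfl
  have e : 1 + t.length - 1 = t.length := by omega
  rw [e] at ht
  have hd0 : d0 < b := hl d0 (by simp)
  have hd0Z : (d0 : ℤ) ≤ (b : ℤ) - 1 := by omega
  have hd00 : (0 : ℤ) ≤ d0 := by positivity
  have hlead : ((b : ℤ) - 1) - ((b : ℤ) - 1) ^ 2 ≤ (d0 : ℤ) - (d0 : ℤ) ^ 2 := by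
    nlinarith [mul_nonpos_of_nonpos_of_nonneg
      (by omega : (d0 : ℤ) - ((b:ℤ) - 1) ≤ 0) (by omega : (0:ℤ) ≤ (d0 : ℤ) + (b:ℤ) - 2)]
  have hpow : (b : ℤ) ^ (n + 1) ≤ (b : ℤ) ^ t.length := by
    apply pow_le_pow_right₀ (by linarith)
    simp only [List.length_cons] at hlen
    omega
  rw [show Nat.ofDigits ((b:ℤ)) (d0 :: t)
      = (d0 : ℤ) + (b:ℤ) * Nat.ofDigits (b:ℤ) t from rfl, sqsum_cons]
  have expand : (b:ℤ) * Nat.ofDigits (b:ℤ) t = Nat.ofDigits (b:ℤ) t * (b:ℤ) ^ 1 := by ring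
  rw [expand]
  nlinarith [ht]

theorem stmt_18 (b n : ℕ) (hb : 2 ≤ b) (hn : 2 ≤ n) :
    4 * (((b : ℤ) ^ (n + 1) - (b : ℤ) ^ 2 + 3 * b - 3) -
        ((b : ℤ) ^ (n + 1) - (b : ℤ) ^ 2 - ((n : ℤ) - 1) * ((b : ℤ) - 1) ^ 2 +
          ((b : ℤ) - ((b / 2 : ℕ) : ℤ)) * ((b / 2 : ℕ) : ℤ)) - 1) >
      (4 * (n : ℤ) - 5) * ((b : ℤ) - 1) ^ 2 ∧
    ∀ c : ℕ,
      ((b : ℤ) ^ (n + 1) - (b : ℤ) ^ 2 - ((n : ℤ) - 1) * ((b : ℤ) - 1) ^ 2 +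
          ((b : ℤ) - ((b / 2 : ℕ) : ℤ)) * ((b / 2 : ℕ) : ℤ)) < (c : ℤ) →
      (c : ℤ) < (b : ℤ) ^ (n + 1) - (b : ℤ) ^ 2 + 3 * b - 3 →
      ¬ ∃ a : ℕ, 0 < a ∧ S c b a = a := by
  have hbZ : (2 : ℤ) ≤ b := by exact_mod_cast hb
  set H : ℤ := ((b / 2 : ℕ) : ℤ) with hH
  have hH1 : 2 * H ≤ (b : ℤ) := by omega
  have hH2 : (b : ℤ) ≤ 2 * H + 1 := by omega
  have hH0 : 0 ≤ H := by omega
  constructor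
  · nlinarith [sq_nonneg ((b : ℤ) - 2 * H)]
  · rintro c hc1 hc2 ⟨a, ha, hfix⟩
    unfold S at hfix
    set l := Nat.digits b a with hl
    have hdig : ∀ d ∈ l, d < b := fun d hd => Nat.digits_lt_base (by omega) hd
    have hofd : Nat.ofDigits (b : ℤ) l = (a : ℤ) := by
      rw [← Nat.coe_ofDigits, hl, Nat.ofDigits_digits]
    have hsum : (c : ℤ) + sqsum l = (a : ℤ) := by
      rw [sqsum]
      exact_mod_cast hfix
    rcases le_or_gt l.length (n + 1) with hlen | hlen
    · have := upper_bound b n hb hn l hdig hlen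
      rw [hofd] at this
      linarith
    · have hne : l ≠ [] := Nat.digits_ne_nil_iff_ne_zero.mpr (by omega)
      have hlast : l.getLast hne ≠ 0 := Nat.getLast_digit_ne_zero b (by omega)
      have := lower_bound b n hb l hdig hne hlast (by omega)
      rw [hofd] at this
      linarith
end

section
/- For every integer b ≥ 2 and every positive integer k, there exists a nonnegative integer c₀ such that for every integer c with c₀ ≤ c < c₀ + k, the function S_{[c,b]} has no fixed point; that is, there exists a k-desert base b. -/
/-- Sum of squares of base-`b` digits. -/
def Fd (b a : ℕ) : ℕ := ((Nat.digits b a).map (· ^ 2)).sum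

lemma Fd_zero (b : ℕ) : Fd b 0 = 0 := by simp [Fd]

lemma Fd_rec {b : ℕ} (hb : 2 ≤ b) {a : ℕ} (ha : 0 < a) :
    Fd b a = (a % b) ^ 2 + Fd b (a / b) := by
  rw [Fd, Nat.digits_def' hb ha]
  simp [Fd]

lemma Fd_single {b : ℕ} (hb : 2 ≤ b) {d : ℕ} (hd : d < b) : Fd b d = d ^ 2 := by
  rcases Nat.eq_zero_or_pos d with h | h
  · simp [h, Fd_zero]
  · rw [Fd_rec hb h, Nat.mod_eq_of_lt hd, Nat.div_eq_of_lt hd, Fd_zero, Nat.add_zero]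

lemma Fd_split {b : ℕ} (hb : 2 ≤ b) :
    ∀ n r q : ℕ, r < b ^ n → Fd b (q * b ^ n + r) = Fd b q + Fd b r := by
  intro n
  induction n with
  | zero =>
    intro r q hr
    have hr0 : r = 0 := by simpa [Nat.lt_one_iff] using hr
    simp [hr0, Fd_zero]
  | succ n ih =>
    intro r q hr
    rcases Nat.eq_zero_or_pos q with hq | hq
    · simp [hq, Fd_zero]
    have hbpos : 0 < b := by omega
    have ha : 0 < q * b ^ (n + 1) + r := by positivity
    have heq : q * b ^ (n + 1) + r = b * (q * b ^ n) + r := by ring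
    have hmod : (q * b ^ (n + 1) + r) % b = r % b := by
      rw [heq, Nat.mul_add_mod]
    have hdiv : (q * b ^ (n + 1) + r) / b = q * b ^ n + r / b := by
      rw [heq, Nat.mul_add_div hbpos]
    have hrb : r / b < b ^ n := by
      rw [Nat.div_lt_iff_lt_mul hbpos, ← pow_succ]
      exact hr
    rw [Fd_rec hb ha, hmod, hdiv, ih (r / b) q hrb]
    rcases Nat.eq_zero_or_pos r with hr0 | hr0
    · simp [hr0, Fd_zero]
    · rw [Fd_rec hb hr0]; ring

lemma Fd_le_aux {b : ℕ} (hb : 2 ≤ b) :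
    ∀ n : ℕ, ∀ a : ℕ, a < b ^ n → (Fd b a : ℤ) ≤ (a : ℤ) + ((b : ℤ) - 1) ^ 2 := by
  intro n
  induction n with
  | zero =>
    intro a ha
    have ha0 : a = 0 := by simpa [Nat.lt_one_iff] using ha
    subst ha0
    simp only [Fd_zero, Nat.cast_zero, zero_add]
    positivity
  | succ n ih =>
    intro a ha
    have hbpos : 0 < b := by omega
    have hbZ : (2:ℤ) ≤ (b:ℤ) := by exact_mod_cast hb
    rcases Nat.eq_zero_or_pos n with hn | hn
    · -- a < b : single digit
      subst hn
      have ha' : a < b := by simpa using ha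
      rw [Fd_single hb ha']
      have haZ : (a : ℤ) ≤ (b:ℤ) - 1 := by
        have h1 : (a : ℤ) < (b : ℤ) := by exact_mod_cast ha'
        omega
      have ha0 : (0:ℤ) ≤ (a:ℤ) := by positivity
      push_cast
      nlinarith
    · have hpow : 0 < b ^ n := Nat.pow_pos hbpos
      obtain ⟨d, hd⟩ : ∃ x, a / b ^ n = x := ⟨_, rfl⟩
      obtain ⟨r, hr⟩ : ∃ x, a % b ^ n = x := ⟨_, rfl⟩
      have hsplit : a = d * b ^ n + r := by
        rw [← hd, ← hr, Nat.mul_comm]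
        exact (Nat.div_add_mod a (b ^ n)).symm
      have hrlt : r < b ^ n := hr ▸ Nat.mod_lt a hpow
      have hdlt : d < b := by
        rw [← hd, Nat.div_lt_iff_lt_mul hpow, ← pow_succ']
        exact ha
      rcases Nat.eq_zero_or_pos d with hd0 | hd0
      · have hlt : a < b ^ n := by
          have : a = r := by rw [hsplit, hd0, Nat.zero_mul, Nat.zero_add]
          omega
        exact ih a hlt
      · have hFa : Fd b a = d ^ 2 + Fd b r := by
          rw [hsplit, Fd_split hb n r d hrlt, Fd_single hb hdlt]
        have ihr := ih r hrlt
        have hbn : (b : ℕ) ≤ b ^ n := Nat.le_self_pow (by omega) b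
        have hbnZ : (b : ℤ) ≤ (b : ℤ) ^ n := by exact_mod_cast hbn
        have hdZ : (1:ℤ) ≤ (d:ℤ) := by exact_mod_cast hd0
        have hdZ2 : (d:ℤ) ≤ (b:ℤ) - 1 := by
          have h1 : (d : ℤ) < (b : ℤ) := by exact_mod_cast hdlt
          omega
        have haZ : (a:ℤ) = (d:ℤ) * (b:ℤ)^n + (r:ℤ) := by exact_mod_cast hsplit
        have hdd : (d:ℤ)^2 ≤ (d:ℤ) * (b:ℤ)^n := by nlinarith
        rw [hFa]
        push_cast
        rw [haZ]
        linarith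
lemma Fd_le {b : ℕ} (hb : 2 ≤ b) (a : ℕ) : (Fd b a : ℤ) ≤ (a : ℤ) + ((b : ℤ) - 1) ^ 2 :=
  Fd_le_aux hb a a (Nat.lt_pow_self (n := a) hb)

lemma Qlem {b : ℕ} (hb : 2 ≤ b) :
    ∀ n : ℕ, (n : ℤ) * ((b:ℤ) - 1) ^ 2 ≤ (b:ℤ) ^ (n + 1) - 1 := by
  have hbZ : (2:ℤ) ≤ (b:ℤ) := by exact_mod_cast hb
  intro n
  induction n with
  | zero => simp; nlinarith
  | succ n ih =>
    have hbn : (b : ℤ) ≤ (b : ℤ) ^ (n + 1) := by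
      exact_mod_cast Nat.le_self_pow (by omega) b
    have h7 : (0:ℤ) ≤ ((b:ℤ)^(n+1) - ((b:ℤ) - 1)) * ((b:ℤ) - 1) :=
      mul_nonneg (by linarith) (by linarith)
    push_cast
    rw [pow_succ (b:ℤ) (n+1)]
    linarith [ih, h7]

set_option maxHeartbeats 1000000 in
/-- Upper bound: for `a < b ^ n`, `a - Fd a ≤ b^n - 1 + b^2 - (n-1)(b-1)^2`. -/
lemma g_le {b : ℕ} (hb : 2 ≤ b) :
    ∀ n : ℕ, ∀ a : ℕ, a < b ^ n →
      (a : ℤ) + ((n:ℤ) - 1) * ((b:ℤ) - 1) ^ 2 ≤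
        (Fd b a : ℤ) + (b:ℤ) ^ n - 1 + (b:ℤ) ^ 2 := by
  have hbZ : (2:ℤ) ≤ (b:ℤ) := by exact_mod_cast hb
  intro n
  induction n with
  | zero =>
    intro a ha
    have ha0 : a = 0 := by simpa [Nat.lt_one_iff] using ha
    subst ha0
    simp only [Fd_zero, Nat.cast_zero, pow_zero]
    nlinarith [sq_nonneg ((b:ℤ) - 1), sq_nonneg (b:ℤ)]
  | succ n ih =>
    intro a ha
    have hbpos : 0 < b := by omega
    rcases Nat.eq_zero_or_pos a with ha0 | ha0
    · subst ha0
      have hQ := Qlem hb n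
      have hb2 : (0:ℤ) ≤ (b:ℤ)^2 := by positivity
      simp only [Fd_zero, Nat.cast_zero]
      push_cast
      linarith
    rcases Nat.eq_zero_or_pos n with hn | hn
    · -- n = 0 : a < b, single digit, a ≥ 1
      subst hn
      have ha' : a < b := by simpa using ha
      rw [Fd_single hb ha']
      have haZ : (1:ℤ) ≤ (a:ℤ) := by exact_mod_cast ha0
      have hsq : (a:ℤ) ≤ (a:ℤ)^2 := by nlinarith
      push_cast
      nlinarith
    -- n ≥ 1
    have hpow : 0 < b ^ n := Nat.pow_pos hbpos
    obtain ⟨d, hd⟩ : ∃ x, a / b ^ n = x := ⟨_, rfl⟩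
    obtain ⟨r, hr⟩ : ∃ x, a % b ^ n = x := ⟨_, rfl⟩
    have hsplit : a = d * b ^ n + r := by
      rw [← hd, ← hr, Nat.mul_comm]
      exact (Nat.div_add_mod a (b ^ n)).symm
    have hrlt : r < b ^ n := hr ▸ Nat.mod_lt a hpow
    have hdlt : d < b := by
      rw [← hd, Nat.div_lt_iff_lt_mul hpow, ← pow_succ']
      exact ha
    have haZ : (a:ℤ) = (d:ℤ) * (b:ℤ)^n + (r:ℤ) := by exact_mod_cast hsplit
    have hbn : (b:ℤ) ≤ (b:ℤ)^n := by
      exact_mod_cast Nat.le_self_pow (by omega) b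
    rcases Nat.eq_zero_or_pos d with hd0 | hd0
    · -- top digit zero: use IH and b^n grows
      have hlt : a < b ^ n := by
        have : a = r := by rw [hsplit, hd0, Nat.zero_mul, Nat.zero_add]
        omega
      have hih := ih a hlt
      have hKb : ((b:ℤ)-1)^2 ≤ (b:ℤ)^n * ((b:ℤ) - 1) := by nlinarith
      have hexp : (b:ℤ)^(n+1) = (b:ℤ)^n * ((b:ℤ) - 1) + (b:ℤ)^n := by ring
      push_cast
      linarith
    · have hFa : Fd b a = d ^ 2 + Fd b r := by
        rw [hsplit, Fd_split hb n r d hrlt, Fd_single hb hdlt]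
      have hdZ : (1:ℤ) ≤ (d:ℤ) := by exact_mod_cast hd0
      have hdZ2 : (d:ℤ) ≤ (b:ℤ) - 1 := by
        have h1 : (d : ℤ) < (b : ℤ) := by exact_mod_cast hdlt
        omega
      have hrZ : (0:ℤ) ≤ (r:ℤ) := by positivity
      have hrZ2 : (r:ℤ) ≤ (b:ℤ)^n - 1 := by
        have h2 : ((r:ℤ)) < ((b:ℤ))^n := by exact_mod_cast hrlt
        omega
      rcases Nat.eq_zero_or_pos (n - 1) with hn1 | hn1
      · -- n = 1 : two-digit numbers, special case
        have hn' : n = 1 := by omega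
        subst hn'
        have hrlt' : r < b := by simpa using hrlt
        rw [hFa, Fd_single hb hrlt']
        have hrsq : (r:ℤ) ≤ (r:ℤ)^2 := by nlinarith
        have hrb : (r:ℤ) ≤ (b:ℤ) - 1 := by
          have h1 : (r : ℤ) < (b : ℤ) := by exact_mod_cast hrlt'
          omega
        have hdb : (d:ℤ) * (b:ℤ) ≤ ((b:ℤ) - 1) * (b:ℤ) := by nlinarith
        clear ih
        push_cast
        rw [haZ]
        linarith [sq_nonneg (d:ℤ), hdb, hrsq, hbZ]
      · -- n ≥ 2
        have hn2 : 2 ≤ n := by omega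
        have ihr := ih r hrlt
        have hb2n : (b:ℤ)^2 ≤ (b:ℤ)^n := by
          have h3 : (b:ℕ)^2 ≤ b^n := Nat.pow_le_pow_right hbpos hn2
          exact_mod_cast h3
        have hsum : (b:ℤ) - 1 + (d:ℤ) ≤ (b:ℤ)^n := by
          linarith [sq_nonneg ((b:ℤ) - 1), hb2n, hdZ2]
        have key : (0:ℤ) ≤ ((b:ℤ) - 1 - (d:ℤ)) * ((b:ℤ)^n - ((b:ℤ) - 1 + (d:ℤ))) :=
          mul_nonneg (by linarith) (by linarith)
        have key2 : ((b:ℤ)-1)^2 - (d:ℤ)^2 ≤ (b:ℤ)^n * (b:ℤ) - (b:ℤ)^n - (d:ℤ)*(b:ℤ)^n := by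
          nlinarith [key]
        clear ih
        rw [hFa]
        push_cast
        rw [haZ, pow_succ (b:ℤ) n]
        linarith

/-- Lower bound: for `a ≥ b ^ n`, `a - Fd a ≥ b^n - 1 - 2(b-1)^2`. -/
lemma g_ge {b : ℕ} (hb : 2 ≤ b) (n a : ℕ) (h : b ^ n ≤ a) :
    (b:ℤ) ^ n - 1 - 2 * ((b:ℤ) - 1) ^ 2 ≤ (a : ℤ) - (Fd b a : ℤ) := by
  have hbpos : 0 < b := by omega
  have hpow : 0 < b ^ n := Nat.pow_pos hbpos
  obtain ⟨q, hq⟩ : ∃ x, a / b ^ n = x := ⟨_, rfl⟩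
  obtain ⟨r, hr⟩ : ∃ x, a % b ^ n = x := ⟨_, rfl⟩
  have hsplit : a = q * b ^ n + r := by
    rw [← hq, ← hr, Nat.mul_comm]
    exact (Nat.div_add_mod a (b ^ n)).symm
  have hrlt : r < b ^ n := hr ▸ Nat.mod_lt a hpow
  have hq1 : 1 ≤ q := hq ▸ (Nat.one_le_div_iff hpow).mpr h
  have hFa : Fd b a = Fd b q + Fd b r := by
    rw [hsplit, Fd_split hb n r q hrlt]
  have h1 := Fd_le hb q
  have h2 := Fd_le hb r
  have hqZ : (1:ℤ) ≤ (q:ℤ) := by exact_mod_cast hq1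
  have haZ : (a:ℤ) = (q:ℤ) * (b:ℤ)^n + (r:ℤ) := by exact_mod_cast hsplit
  have hbnZ : (1:ℤ) ≤ (b:ℤ)^n := by exact_mod_cast hpow
  have h3 : (0:ℤ) ≤ ((q:ℤ) - 1) * ((b:ℤ)^n - 1) :=
    mul_nonneg (by linarith) (by linarith)
  have h4 : (b:ℤ)^n - 1 ≤ (q:ℤ) * (b:ℤ)^n - (q:ℤ) := by linarith [h3]
  rw [hFa]
  push_cast
  rw [haZ]
  linarith

set_option maxHeartbeats 1000000 in
theorem stmt_19 (b : ℕ) (hb : 2 ≤ b) (k : ℕ) (hk : 0 < k) :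
    ∃ c₀ : ℕ, ∀ c : ℕ, c₀ ≤ c → c < c₀ + k → ¬ ∃ a : ℕ, 0 < a ∧ S c b a = a := by
  have hbZ : (2:ℤ) ≤ (b:ℤ) := by exact_mod_cast hb
  obtain ⟨n, hn⟩ : ∃ n : ℕ, n = k + b ^ 2 + 4 := ⟨_, rfl⟩
  have hn1 : 1 ≤ n := by omega
  have hQ : ((n:ℤ) - 1) * ((b:ℤ) - 1) ^ 2 ≤ (b:ℤ) ^ n - 1 := by
    have h0 := Qlem hb (n - 1)
    have hcast : ((n - 1 : ℕ) : ℤ) = (n:ℤ) - 1 := by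
      push_cast [Nat.cast_sub hn1]; ring
    rw [hcast] at h0
    have hexp : (n - 1) + 1 = n := by omega
    rwa [hexp] at h0
  have hQN : (n - 1) * (b - 1) ^ 2 ≤ b ^ n + b ^ 2 := by
    have hcast1 : (((n-1) * (b-1)^2 : ℕ) : ℤ) = ((n:ℤ) - 1) * ((b:ℤ) - 1)^2 := by
      push_cast [Nat.cast_sub hn1, Nat.cast_sub (by omega : 1 ≤ b)]
      ring
    have hb2 : (0:ℤ) ≤ (b:ℤ)^2 := by positivity
    have h5 : (((n-1) * (b-1)^2 : ℕ) : ℤ) ≤ ((b ^ n + b ^ 2 : ℕ) : ℤ) := by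
      rw [hcast1, Nat.cast_add, Nat.cast_pow, Nat.cast_pow]
      linarith
    exact_mod_cast h5
  refine ⟨b ^ n + b ^ 2 - (n - 1) * (b - 1) ^ 2, ?_⟩
  intro c hc1 hc2
  rintro ⟨a, ha, hfix⟩
  have hc0Z : ((b ^ n + b ^ 2 - (n - 1) * (b - 1) ^ 2 : ℕ) : ℤ)
      = (b:ℤ)^n + (b:ℤ)^2 - ((n:ℤ) - 1) * ((b:ℤ) - 1)^2 := by
    rw [Nat.cast_sub hQN]
    push_cast [Nat.cast_sub hn1, Nat.cast_sub (by omega : 1 ≤ b)]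
    ring
  have hSa : c + Fd b a = a := hfix
  have hceq : (c:ℤ) = (a:ℤ) - (Fd b a : ℤ) := by
    have h6 : ((c + Fd b a : ℕ) : ℤ) = (a:ℤ) := by exact_mod_cast hSa
    push_cast at h6
    linarith
  have hc1Z : ((b ^ n + b ^ 2 - (n - 1) * (b - 1) ^ 2 : ℕ) : ℤ) ≤ (c:ℤ) := by
    exact_mod_cast hc1
  have hc2Z : (c:ℤ) < ((b ^ n + b ^ 2 - (n - 1) * (b - 1) ^ 2 : ℕ) : ℤ) + (k:ℤ) := by
    exact_mod_cast hc2
  rw [hc0Z] at hc1Z hc2Z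
  have hK1 : (1:ℤ) ≤ ((b:ℤ) - 1)^2 := by nlinarith [sq_nonneg ((b:ℤ) - 2)]
  by_cases hcase : a < b ^ n
  · have := g_le hb n a hcase
    linarith
  · push_neg at hcase
    have hlow := g_ge hb n a hcase
    have hnZ : (n:ℤ) = (k:ℤ) + (b:ℤ)^2 + 4 := by
      rw [hn]; push_cast; ring
    rw [hnZ] at hc2Z
    have hmul : ((k:ℤ) + (b:ℤ)^2 + 1) * 1 ≤ ((k:ℤ) + (b:ℤ)^2 + 1) * ((b:ℤ) - 1)^2 := by
      apply mul_le_mul_of_nonneg_left hK1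
      positivity
    linarith [hmul, hlow, hceq, hc2Z]
end
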